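/- arXiv:0801.4194 — 4 statements merged into one kernel-verified Lean document; each statement's English description precedes it below -/
import Mathlib

section
/- Let Q and D be real numbers with Q > 0 and D ≥ 1. Then the series W(Q,D) = ∑_{p ∈ dom U} |p|^Q · 2^{−|p|/D} diverges to ∞ (equivalently, the family of its nonnegative terms is not summable). -/
open Filter

/-- A set of finite binary strings is prefix-free if no element of it is a
prefix of another (distinct) element of it. -/
def PrefixFree (S : Set (List Bool)) : Prop :=
  ∀ p ∈ S, ∀ q ∈ S, p <+: q → p = q

/-- A computer: a partial recursive function from finite binary strings to
finite binary strings whose domain is a prefix-free set. -/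
structure Computer where
  f : List Bool →. List Bool
  partrec : Partrec f
  prefixFree : PrefixFree {p | (f p).Dom}

/-- The domain of a computer. -/
def Computer.domain (C : Computer) : Set (List Bool) := {p | (C.f p).Dom}

/-- A computer `U` is optimal if every computer can be simulated on `U` with
only a constant increase in program length. -/
def IsOptimal (U : Computer) : Prop :=
  ∀ C : Computer, ∃ d : ℕ, ∀ p : List Bool, (C.f p).Dom →
    ∃ p' : List Bool, p'.length ≤ p.length + d ∧ ∀ s, s ∈ C.f p → s ∈ U.f p'

/-- Program-size complexity `H(s)`: the minimal length of a program `p`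
with `U(p) = s`. -/
noncomputable def H (U : Computer) (s : List Bool) : ℕ :=
  sInf {n | ∃ p : List Bool, p.length = n ∧ s ∈ U.f p}

/-- The `n`-th bit (`n ≥ 1`) of the base-two expansion of `x mod 1`
(the expansion chosen with infinitely many zeros). -/
noncomputable def binDigit (x : ℝ) (n : ℕ) : Bool :=
  decide (⌊Int.fract x * 2 ^ n⌋ % 2 = 1)

/-- The first `n` bits of the base-two expansion of `x mod 1` (with
infinitely many zeros). -/
noncomputable def bits (x : ℝ) (n : ℕ) : List Bool :=
  (List.range n).map fun i => binDigit x (i + 1)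

/-- A real `x` is weakly Chaitin `D`-random (w.r.t. the computer `U`). -/
def WeaklyChaitinRandom (U : Computer) (D x : ℝ) : Prop :=
  ∃ c : ℝ, ∀ n : ℕ, 1 ≤ n → D * n - c ≤ (H U (bits x n) : ℝ)

/-- A real `x` is Chaitin `D`-random (w.r.t. the computer `U`). -/
def ChaitinRandom (U : Computer) (D x : ℝ) : Prop :=
  Tendsto (fun n : ℕ => (H U (bits x n) : ℝ) - D * n) atTop atTop

/-- A real `x` is `D`-compressible (w.r.t. the computer `U`). -/
def DCompressible (U : Computer) (D x : ℝ) : Prop :=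
  Filter.limsup (fun n : ℕ => (H U (bits x n) : ℝ) / n) atTop ≤ D

/-- A computable real number. -/
def ComputableReal (T : ℝ) : Prop :=
  ∃ f : ℕ → ℚ, Computable f ∧ ∀ n : ℕ, 1 ≤ n → |T - (f n : ℝ)| < 1 / n

/-- A right-computable real number. -/
def RightComputable (T : ℝ) : Prop :=
  ∃ g : ℕ → ℚ, Computable g ∧ (∀ n, T ≤ (g n : ℝ)) ∧
    Tendsto (fun n => ((g n : ℚ) : ℝ)) atTop (nhds T)

/-- A left-computable real number. -/
def LeftComputable (T : ℝ) : Prop := RightComputable (-T)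

/-- The term `2 ^ (-|p| / T)` of the partition function `Z(T)`. -/
noncomputable def zterm (U : Computer) (T : ℝ) (p : U.domain) : ℝ :=
  (2 : ℝ) ^ (-((p : List Bool).length : ℝ) / T)

/-- The term `|p| ^ Q * 2 ^ (-|p| / T)` of `W(Q,T)`. -/
noncomputable def wterm (U : Computer) (Q T : ℝ) (p : U.domain) : ℝ :=
  ((p : List Bool).length : ℝ) ^ Q * (2 : ℝ) ^ (-((p : List Bool).length : ℝ) / T)

/-- The term `|p| * 2 ^ (-|p| / T)` of `W(1,T)`. -/
noncomputable def wlterm (U : Computer) (T : ℝ) (p : U.domain) : ℝ :=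
  ((p : List Bool).length : ℝ) * (2 : ℝ) ^ (-((p : List Bool).length : ℝ) / T)

/-- The term `|p| ^ 2 * 2 ^ (-|p| / T)` of `W(2,T)`. -/
noncomputable def wsqterm (U : Computer) (T : ℝ) (p : U.domain) : ℝ :=
  ((p : List Bool).length : ℝ) ^ 2 * (2 : ℝ) ^ (-((p : List Bool).length : ℝ) / T)

/-- A lower-computable function `f : ℕ⁺ → [0,∞)` (represented on `ℕ`,
with all conditions imposed on positive arguments). -/
def LowerComputableFun (f : ℕ → ℝ) : Prop :=
  ∃ a : ℕ → ℕ → ℚ, Computable₂ a ∧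
    (∀ k n : ℕ, 1 ≤ k → 1 ≤ n → (a k n : ℝ) ≤ f n) ∧
    (∀ n : ℕ, 1 ≤ n → Tendsto (fun k => ((a k n : ℚ) : ℝ)) atTop (nhds (f n)))

/-- A lower-computable semi-measure on finite binary strings. -/
def LowerComputableSemiMeasure (r : List Bool → ℝ) : Prop :=
  (∀ s, 0 ≤ r s) ∧ (∀ s, r s ≤ 1) ∧ Summable r ∧ (∑' s, r s) ≤ 1 ∧
    ∃ f : ℕ → List Bool → ℚ, Computable₂ f ∧
      (∀ n s, ((f n s : ℚ) : ℝ) ≤ r s) ∧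
      (∀ s, Tendsto (fun n => ((f n s : ℚ) : ℝ)) atTop (nhds (r s)))

/-- A universal probability. -/
def UniversalProbability (m : List Bool → ℝ) : Prop :=
  LowerComputableSemiMeasure m ∧
    ∀ r : List Bool → ℝ, LowerComputableSemiMeasure r →
      ∃ c : ℝ, 0 < c ∧ ∀ s, c * r s ≤ m s


namespace WNS

/-! ### The value function `nu'` on bit strings -/

/-- `nu' v` interprets `true :: v` as a big-endian binary number (so `nu'` is injective). -/
def nu' (v : List Bool) : ℕ := v.foldl (fun n b => 2 * n + cond b 1 0) 1

/-- `nu v = nu' v - 1` ranges over all of `ℕ`. -/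
def nu (v : List Bool) : ℕ := nu' v - 1

theorem nu'_nil : nu' [] = 1 := rfl

theorem foldl_append_singleton (v : List Bool) (b : Bool) (i : ℕ) :
    (v ++ [b]).foldl (fun n b => 2 * n + cond b 1 0) i
      = 2 * v.foldl (fun n b => 2 * n + cond b 1 0) i + cond b 1 0 := by
  simp [List.foldl_append]

theorem nu'_append_singleton (v : List Bool) (b : Bool) :
    nu' (v ++ [b]) = 2 * nu' v + cond b 1 0 := foldl_append_singleton v b 1

theorem nu'_bounds (v : List Bool) : 2 ^ v.length ≤ nu' v ∧ nu' v < 2 ^ (v.length + 1) := by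
  induction v using List.reverseRecOn with
  | nil => simp [nu'_nil]
  | append_singleton v b ih =>
      rw [nu'_append_singleton]
      rcases ih with ⟨h1, h2⟩
      constructor
      · simp only [List.length_append, List.length_singleton]
        cases b <;> simp <;> omega
      · simp only [List.length_append, List.length_singleton]
        have : 2 ^ (v.length + 1 + 1) = 2 * 2 ^ (v.length + 1) := by ring
        cases b <;> simp <;> omega

theorem one_le_nu' (v : List Bool) : 1 ≤ nu' v :=
  le_trans (Nat.one_le_two_pow) (nu'_bounds v).1

theorem nu'_lt (v : List Bool) : nu' v < 2 ^ (v.length + 1) := (nu'_bounds v).2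

theorem nu'_length_eq {v w : List Bool} (h : nu' v = nu' w) : v.length = w.length := by
  by_contra hne
  rcases Nat.lt_or_ge v.length w.length with hlt | hge
  · have := (nu'_bounds w).1
    have := (nu'_bounds v).2
    have : 2 ^ (v.length + 1) ≤ 2 ^ w.length := Nat.pow_le_pow_right (by norm_num) hlt
    omega
  · have hlt : w.length < v.length := by omega
    have := (nu'_bounds v).1
    have := (nu'_bounds w).2
    have : 2 ^ (w.length + 1) ≤ 2 ^ v.length := Nat.pow_le_pow_right (by norm_num) hlt
    omega

theorem nu'_inj : Function.Injective nu' := by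
  intro p q h
  induction p using List.reverseRecOn generalizing q with
  | nil =>
      induction q using List.reverseRecOn with
      | nil => rfl
      | append_singleton q c _ =>
          exfalso
          rw [nu'_nil, nu'_append_singleton] at h
          have := one_le_nu' q
          cases c <;> simp at h <;> omega
  | append_singleton p b ih =>
      induction q using List.reverseRecOn with
      | nil =>
          exfalso
          rw [nu'_nil, nu'_append_singleton] at h
          have := one_le_nu' p
          cases b <;> simp at h <;> omega
      | append_singleton q c _ =>
          rw [nu'_append_singleton, nu'_append_singleton] at h
          have hbc : b = c := by cases b <;> cases c <;> simp at h ⊢ <;> omega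
          subst hbc
          have : nu' p = nu' q := by cases b <;> simp at h <;> omega
          rw [ih this]

/-! ### The canonical encoding `enc : ℕ → List Bool` -/

def enc : ℕ → List Bool
  | 0 => []
  | (n + 1) => enc (n / 2) ++ [decide (n % 2 = 1)]
decreasing_by exact Nat.lt_succ_of_le (Nat.div_le_self n 2)

theorem nu'_enc (n : ℕ) : nu' (enc n) = n + 1 := by
  induction n using Nat.strong_induction_on with
  | _ n ih =>
      match n with
      | 0 => simp [enc, nu'_nil]
      | (m + 1) =>
          rw [enc, nu'_append_singleton, ih (m / 2) (Nat.lt_succ_of_le (Nat.div_le_self m 2))]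
          rcases Nat.even_or_odd m with he | ho
          · have : m % 2 = 0 := Nat.even_iff.mp he
            simp [this]; omega
          · have : m % 2 = 1 := Nat.odd_iff.mp ho
            simp [this]; omega

theorem nu_enc (n : ℕ) : nu (enc n) = n := by
  rw [nu, nu'_enc]; omega

theorem length_enc (n : ℕ) : (enc n).length = Nat.log 2 (n + 1) := by
  induction n using Nat.strong_induction_on with
  | _ n ih =>
      match n with
      | 0 => simp [enc]
      | (m + 1) =>
          rw [enc]
          simp only [List.length_append, List.length_singleton]
          rw [ih (m / 2) (Nat.lt_succ_of_le (Nat.div_le_self m 2))]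
          have h2 : (m + 2) / 2 = m / 2 + 1 := by omega
          have h3 : Nat.log 2 ((m + 2) / 2) = Nat.log 2 (m + 2) - 1 := Nat.log_div_base 2 (m + 2)
          have h4 : 0 < Nat.log 2 (m + 2) := Nat.log_pos (by norm_num) (by omega)
          rw [h2] at h3
          have h5 : Nat.log 2 (m + 1 + 1) = Nat.log 2 (m + 2) := by norm_num
          omega

/-! ### Parsing -/

def parse (p : List Bool) : Option (List Bool) :=
  let a := p.idxOf true
  let r := p.drop (a + 1)
  let v := r.take a
  let w := (r.drop a).take (nu v)
  let s := (r.drop a).drop (nu v)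
  if a < p.length ∧ v.length = a ∧ w.length = nu v ∧ s.length = nu w then some s else none

def code (s : List Bool) : List Bool :=
  let w := enc s.length
  let v := enc w.length
  List.replicate v.length false ++ true :: (v ++ (w ++ s))

theorem indexOf_shape (a : ℕ) (t : List Bool) :
    (List.replicate a false ++ true :: t).idxOf true = a := by
  induction a with
  | zero => simp
  | succ a ih =>
      rw [List.replicate_succ, List.cons_append, List.idxOf_cons_ne _ (by decide), ih]

theorem shape_decomp {p : List Bool} (h : true ∈ p) :
    p = List.replicate (p.idxOf true) false ++ true :: p.drop (p.idxOf true + 1) := by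
  induction p with
  | nil => simp at h
  | cons b p ih =>
      cases b
      · have h' : true ∈ p := by simpa using h
        rw [List.idxOf_cons_ne _ (by decide)]
        show false :: p = List.replicate ((p.idxOf true) + 1) false ++
          true :: (false :: p).drop (p.idxOf true + 1 + 1)
        rw [List.replicate_succ, List.cons_append, List.drop_succ_cons]
        exact congrArg (false :: ·) (ih h')
      · simp

theorem parse_shape {a : ℕ} {v w s : List Bool} (hv : v.length = a) (hw : w.length = nu v)
    (hs : s.length = nu w) :
    parse (List.replicate a false ++ true :: (v ++ (w ++ s))) = some s := by
  have e1 : (List.replicate a false ++ true :: (v ++ (w ++ s))).idxOf true = a :=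
    indexOf_shape a _
  have e2 : (List.replicate a false ++ true :: (v ++ (w ++ s))).drop (a + 1)
      = v ++ (w ++ s) := by
    rw [show List.replicate a false ++ true :: (v ++ (w ++ s))
        = (List.replicate a false ++ [true]) ++ (v ++ (w ++ s)) by simp]
    exact List.drop_left' (by simp)
  have e3 : (v ++ (w ++ s)).take a = v := List.take_left' hv
  have e4 : (v ++ (w ++ s)).drop a = w ++ s := List.drop_left' hv
  have e5 : (w ++ s).take (nu v) = w := List.take_left' hw
  have e6 : (w ++ s).drop (nu v) = s := List.drop_left' hw
  have e7 : a < (List.replicate a false ++ true :: (v ++ (w ++ s))).length := by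
    simp
  unfold parse
  simp only [e1, e2, e3, e4, e5, e6]
  rw [if_pos ⟨e7, hv, hw, hs⟩]

theorem parse_eq_some_iff {p s : List Bool} :
    parse p = some s ↔ ∃ a v w, v.length = a ∧ w.length = nu v ∧ s.length = nu w ∧
      p = List.replicate a false ++ true :: (v ++ (w ++ s)) := by
  constructor
  · intro h
    unfold parse at h
    dsimp only at h
    split_ifs at h with hc
    · obtain ⟨h1, h2, h3, h4⟩ := hc
      obtain rfl : _ = s := Option.some_injective _ h
      refine ⟨p.idxOf true, (p.drop (p.idxOf true + 1)).take (p.idxOf true),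
        ((p.drop (p.idxOf true + 1)).drop (p.idxOf true)).take
          (nu ((p.drop (p.idxOf true + 1)).take (p.idxOf true))), h2, h3, h4, ?_⟩
      conv_lhs => rw [shape_decomp (List.idxOf_lt_length_iff.mp h1)]
      rw [List.take_append_drop, List.take_append_drop]
  · rintro ⟨a, v, w, hv, hw, hs, rfl⟩
    exact parse_shape hv hw hs

theorem parse_code (s : List Bool) : parse (code s) = some s := by
  unfold code
  exact parse_shape rfl (by rw [nu_enc]) (by rw [nu_enc])

theorem code_length (s : List Bool) :
    (code s).length = 2 * Nat.log 2 (Nat.log 2 (s.length + 1) + 1) + 1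
      + Nat.log 2 (s.length + 1) + s.length := by
  simp [code, length_enc]
  omega

theorem pf_aux : ∀ a a' : ℕ, ∀ x y : List Bool,
    (List.replicate a false ++ true :: x) <+: (List.replicate a' false ++ true :: y) →
    a = a' ∧ x <+: y := by
  intro a
  induction a with
  | zero =>
      intro a' x y h
      cases a' with
      | zero => simpa [List.cons_prefix_cons] using h
      | succ b =>
          exfalso
          rw [List.replicate_succ, List.cons_append] at h
          simp only [List.replicate, List.nil_append, List.cons_prefix_cons] at h
          exact absurd h.1 (by decide)
  | succ a ih =>
      intro a' x y h
      cases a' with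
      | zero =>
          exfalso
          rw [List.replicate_succ, List.cons_append] at h
          simp only [List.replicate, List.nil_append, List.cons_prefix_cons] at h
          exact absurd h.1 (by decide)
      | succ b =>
          rw [List.replicate_succ, List.cons_append, List.replicate_succ,
            List.cons_append, List.cons_prefix_cons] at h
          obtain ⟨rfl, hxy⟩ := ih b x y h.2
          exact ⟨rfl, hxy⟩

theorem parse_prefixFree {p q s t : List Bool} (hp : parse p = some s) (hq : parse q = some t)
    (hpq : p <+: q) : p = q := by
  rw [parse_eq_some_iff] at hp hq
  obtain ⟨a, v, w, hv, hw, hs, rfl⟩ := hp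
  obtain ⟨a', v', w', hv', hw', hs', rfl⟩ := hq
  obtain ⟨rfl, hxy⟩ := pf_aux a a' _ _ hpq
  have hvv : v = v' := by
    have h1 : v <+: v' ++ (w' ++ t) := (v.prefix_append (w ++ s)).trans hxy
    have h2 : v' <+: v' ++ (w' ++ t) := v'.prefix_append _
    exact (List.prefix_of_prefix_length_le h1 h2 (by omega)).eq_of_length (by omega)
  subst hvv
  have hlw : w.length = w'.length := by rw [hw, hw']
  have hww : w = w' := by
    have h1 : v ++ w <+: v ++ (w' ++ t) := by
      refine List.IsPrefix.trans ?_ hxy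
      rw [← List.append_assoc]
      exact (v ++ w).prefix_append s
    have h2 : v ++ w' <+: v ++ (w' ++ t) := by
      rw [← List.append_assoc]
      exact (v ++ w').prefix_append t
    have h3 := List.prefix_of_prefix_length_le h1 h2 (by simp [hlw])
    have h4 := h3.eq_of_length (by simp [hlw])
    exact List.append_cancel_left h4
  subst hww
  have hst : s = t := by
    have h1 : s <+: t := by
      have := ((List.prefix_append_right_inj v).mp hxy)
      exact (List.prefix_append_right_inj w).mp this
    exact h1.eq_of_length (by rw [hs, hs'])
  rw [hst]

theorem tail_iterate (n : ℕ) (l : List Bool) : (List.tail)^[n] l = l.drop n := by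
  induction n generalizing l with
  | zero => rfl
  | succ n ih =>
      rw [Function.iterate_succ_apply', ih, List.tail_drop]

theorem primrec_drop : Primrec₂ (fun (n : ℕ) (l : List Bool) => l.drop n) := by
  have h : Primrec (fun a : ℕ × List Bool => (List.tail)^[a.1] a.2) :=
    Primrec.nat_iterate Primrec.fst Primrec.snd
      ((Primrec.list_tail.comp Primrec.snd).to₂)
  exact (h.of_eq (fun a => tail_iterate a.1 a.2))

theorem primrec_take : Primrec₂ (fun (n : ℕ) (l : List Bool) => l.take n) := by
  have h : Primrec (fun a : ℕ × List Bool => (a.2.reverse.drop (a.2.length - a.1)).reverse) := by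
    refine Primrec.list_reverse.comp ?_
    exact primrec_drop.comp
      (Primrec.nat_sub.comp (Primrec.list_length.comp Primrec.snd) Primrec.fst)
      (Primrec.list_reverse.comp Primrec.snd)
  refine h.of_eq (fun a => ?_)
  rw [← List.reverse_take, List.reverse_reverse]

theorem primrec_nu' : Primrec nu' := by
  have h : Primrec (fun q : List Bool × (ℕ × Bool) => 2 * q.2.1 + cond q.2.2 1 0) := by
    refine Primrec.nat_add.comp ?_ ?_
    · exact Primrec.nat_mul.comp (Primrec.const 2) (Primrec.fst.comp Primrec.snd)
    · exact Primrec.cond (Primrec.snd.comp Primrec.snd) (Primrec.const 1) (Primrec.const 0)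
  have h2 : Primrec₂ (fun (_ : List Bool) (p : ℕ × Bool) => 2 * p.1 + cond p.2 1 0) := h
  exact Primrec.list_foldl Primrec.id (Primrec.const 1) h2

theorem primrec_nu : Primrec nu :=
  Primrec.nat_sub.comp primrec_nu' (Primrec.const 1)

theorem parse_computable : Computable parse := by
  have pa : Primrec (fun p : List Bool => p.idxOf true) :=
    Primrec.list_idxOf.comp (Primrec.const true) Primrec.id
  have pr : Primrec (fun p : List Bool => p.drop (p.idxOf true + 1)) :=
    primrec_drop.comp (Primrec.succ.comp pa) Primrec.id
  have pv : Primrec (fun p : List Bool => (p.drop (p.idxOf true + 1)).take (p.idxOf true)) :=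
    primrec_take.comp pa pr
  have pd : Primrec (fun p : List Bool => (p.drop (p.idxOf true + 1)).drop (p.idxOf true)) :=
    primrec_drop.comp pa pr
  have pnv : Primrec (fun p : List Bool =>
      nu ((p.drop (p.idxOf true + 1)).take (p.idxOf true))) := primrec_nu.comp pv
  have pw : Primrec (fun p : List Bool =>
      ((p.drop (p.idxOf true + 1)).drop (p.idxOf true)).take
        (nu ((p.drop (p.idxOf true + 1)).take (p.idxOf true)))) :=
    primrec_take.comp pnv pd
  have ps : Primrec (fun p : List Bool =>
      ((p.drop (p.idxOf true + 1)).drop (p.idxOf true)).drop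
        (nu ((p.drop (p.idxOf true + 1)).take (p.idxOf true)))) :=
    primrec_drop.comp pnv pd
  have hc1 : PrimrecPred (fun p : List Bool => p.idxOf true < p.length) :=
    Primrec.nat_lt.comp pa Primrec.list_length
  have hc2 : PrimrecPred (fun p : List Bool =>
      ((p.drop (p.idxOf true + 1)).take (p.idxOf true)).length = p.idxOf true) :=
    Primrec.eq.comp (Primrec.list_length.comp pv) pa
  have hc3 : PrimrecPred (fun p : List Bool =>
      (((p.drop (p.idxOf true + 1)).drop (p.idxOf true)).take
        (nu ((p.drop (p.idxOf true + 1)).take (p.idxOf true)))).length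
        = nu ((p.drop (p.idxOf true + 1)).take (p.idxOf true))) :=
    Primrec.eq.comp (Primrec.list_length.comp pw) pnv
  have hc4 : PrimrecPred (fun p : List Bool =>
      (((p.drop (p.idxOf true + 1)).drop (p.idxOf true)).drop
        (nu ((p.drop (p.idxOf true + 1)).take (p.idxOf true)))).length
        = nu (((p.drop (p.idxOf true + 1)).drop (p.idxOf true)).take
            (nu ((p.drop (p.idxOf true + 1)).take (p.idxOf true))))) :=
    Primrec.eq.comp (Primrec.list_length.comp ps) (primrec_nu.comp pw)
  have hcond := hc1.and (hc2.and (hc3.and hc4))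
  have hite := Primrec.ite hcond (Primrec.option_some.comp ps)
    (Primrec.const (none : Option (List Bool)))
  refine Primrec.to_comp (hite.of_eq (fun p => ?_))
  unfold parse
  dsimp only

/-- The auxiliary computer used against optimality of `U`. -/
noncomputable def CC : Computer where
  f := fun p => (parse p : Part (List Bool))
  partrec := Computable.ofOption parse_computable
  prefixFree := by
    intro p hp q hq hpq
    simp only [Set.mem_setOf_eq, Part.dom_iff_mem] at hp hq
    obtain ⟨s, hs⟩ := hp
    obtain ⟨t, ht⟩ := hq
    rw [Part.mem_ofOption] at hs ht
    exact parse_prefixFree hs ht hpq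

/-! ### Counting -/

/-- Length of `code s` as a function of `s.length`. -/
def clen (n : ℕ) : ℕ :=
  2 * Nat.log 2 (Nat.log 2 (n + 1) + 1) + 1 + Nat.log 2 (n + 1) + n

theorem code_length' (s : List Bool) : (code s).length = clen s.length := code_length s

theorem clen_ge (n : ℕ) : n ≤ clen n := by unfold clen; omega

theorem counting (U : Computer) (d : ℕ) (g : List Bool → List Bool)
    (hmem : ∀ s, s ∈ U.f (g s)) (hlen : ∀ s, (g s).length ≤ clen s.length + d)
    (n : ℕ) (hn : 2 ≤ n) :
    ∃ A : Finset (List Bool),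
      (∀ p ∈ A, (U.f p).Dom ∧ n - 1 ≤ p.length ∧ p.length ≤ clen n + d) ∧
      2 ^ (n - 1) ≤ A.card := by
  classical
  have hginj : Function.Injective g := by
    intro s t h
    exact Part.mem_unique (hmem s) (h ▸ hmem t)
  set Sn : Finset (List Bool) := Finset.image List.ofFn (Finset.univ : Finset (Fin n → Bool))
    with hSn
  have hSn_card : Sn.card = 2 ^ n := by
    rw [hSn, Finset.card_image_of_injective _ List.ofFn_injective]
    simp
  have hSn_len : ∀ s ∈ Sn, s.length = n := by
    intro s hs
    rw [hSn, Finset.mem_image] at hs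
    obtain ⟨f, _, rfl⟩ := hs
    simp
  set I : Finset (List Bool) := Sn.image g with hI
  have hI_card : I.card = 2 ^ n := by
    rw [hI, Finset.card_image_of_injective _ hginj, hSn_card]
  have hB : (I.filter (fun p => ¬ (n - 1 ≤ p.length))).card ≤ 2 ^ (n - 1) - 1 := by
    have hmap : ∀ p ∈ I.filter (fun p => ¬ (n - 1 ≤ p.length)),
        nu' p ∈ Finset.Ico 1 (2 ^ (n - 1)) := by
      intro p hp
      rw [Finset.mem_filter] at hp
      have hplen : p.length + 1 ≤ n - 1 := by omega
      have h1 := nu'_lt p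
      have h2 : 2 ^ (p.length + 1) ≤ 2 ^ (n - 1) := Nat.pow_le_pow_right (by norm_num) hplen
      rw [Finset.mem_Ico]
      exact ⟨one_le_nu' p, by omega⟩
    have hinj : Set.InjOn nu' (I.filter (fun p => ¬ (n - 1 ≤ p.length))) :=
      fun a _ b _ h => nu'_inj h
    have := Finset.card_le_card_of_injOn nu' hmap hinj
    simpa [Nat.card_Ico] using this
  have hsplit := Finset.card_filter_add_card_filter_not
    (s := I) (p := fun p => n - 1 ≤ p.length)
  have hpow : 2 ^ n = 2 * 2 ^ (n - 1) := by
    rw [← pow_succ']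
    congr 1
    omega
  have hpow1 : 1 ≤ 2 ^ (n - 1) := Nat.one_le_two_pow
  refine ⟨I.filter (fun p => n - 1 ≤ p.length), ?_, ?_⟩
  · intro p hp
    rw [Finset.mem_filter] at hp
    obtain ⟨hpI, hplen⟩ := hp
    rw [hI, Finset.mem_image] at hpI
    obtain ⟨s, hs, rfl⟩ := hpI
    refine ⟨Part.dom_iff_mem.mpr ⟨s, hmem s⟩, hplen, ?_⟩
    calc (g s).length ≤ clen s.length + d := hlen s
      _ = clen n + d := by rw [hSn_len s hs]
  · omega

/-! ### Analysis -/

open Real in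
theorem rpow_diff_le {x dl q : ℝ} (hx : 1 ≤ x) (hdl : 0 ≤ dl) (hq0 : 0 ≤ q) (hq1 : q ≤ 1) :
    (x + dl) ^ q - x ^ q ≤ dl * x ^ (q - 1) := by
  have hx0 : (0:ℝ) < x := lt_of_lt_of_le one_pos hx
  have h1 : x + dl = x * (1 + dl / x) := by field_simp
  have h2 : ((1 : ℝ) + dl / x) ^ q ≤ 1 + q * (dl / x) :=
    rpow_one_add_le_one_add_mul_self (le_trans (by norm_num : (-1:ℝ) ≤ 0) (by positivity)) hq0 hq1
  have h3 : (x + dl) ^ q = x ^ q * (1 + dl / x) ^ q := by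
    rw [h1, Real.mul_rpow hx0.le (by positivity)]
  have hxq : (0:ℝ) ≤ x ^ q := Real.rpow_nonneg hx0.le q
  have h4 : x ^ q * (1 + q * (dl / x)) = x ^ q + q * dl * x ^ (q - 1) := by
    have hh : x ^ (q - 1) = x ^ q / x := by
      rw [Real.rpow_sub hx0, Real.rpow_one]
    rw [hh]
    field_simp
  have h5 : (x + dl) ^ q ≤ x ^ q + q * dl * x ^ (q - 1) := by
    rw [h3, ← h4]
    exact mul_le_mul_of_nonneg_left h2 hxq
  have h6 : q * dl * x ^ (q - 1) ≤ dl * x ^ (q - 1) := by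
    apply mul_le_mul_of_nonneg_right _ (Real.rpow_nonneg hx0.le _)
    calc q * dl ≤ 1 * dl := mul_le_mul_of_nonneg_right hq1 hdl
      _ = dl := one_mul dl
  linarith

set_option maxHeartbeats 1000000 in
open Real in
theorem eventual_ineq (d : ℕ) (Q : ℝ) (hQ : 0 < Q) :
    ∀ᶠ n : ℕ in atTop,
      ((clen n + d + 2 : ℕ) : ℝ) ^ (min Q 1 / 2) - (n : ℝ) ^ (min Q 1 / 2) ≤
        (2:ℝ) ^ ((n:ℝ) - 1) * ((n:ℝ) - 1) ^ Q * (2:ℝ) ^ (-((clen n + d : ℕ) : ℝ)) := by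
  set Q' := min Q 1 with hQ'def
  have hQ'0 : 0 < Q' := lt_min hQ one_pos
  have hQ'1 : Q' ≤ 1 := min_le_right _ _
  have hQQ' : Q' ≤ Q := min_le_left _ _
  set q := Q' / 2 with hqdef
  have hq0 : 0 < q := by rw [hqdef]; linarith
  have hq1 : q ≤ 1 := by rw [hqdef]; linarith
  set C0 : ℝ := ((d:ℝ) + 6) * (2:ℝ) ^ ((d:ℝ) + 2) * 4 with hC0def
  have h2d : (0:ℝ) < (2:ℝ) ^ ((d:ℝ) + 2) := Real.rpow_pos_of_pos two_pos _
  have hC0pos : 0 < C0 := by positivity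
  -- log comparison, as a real-variable statement
  have hlog : ∀ᶠ x : ℝ in atTop, C0 * 125 * (Real.log x) ^ 3 ≤ x ^ q := by
    have h := (isLittleO_log_rpow_atTop (by positivity : (0:ℝ) < q / 3)).def
      (c := min 1 (1 / (C0 * 125 + 1))) (by positivity)
    filter_upwards [h, eventually_ge_atTop (1:ℝ)] with x hx hx1
    set ε := min 1 (1 / (C0 * 125 + 1)) with hε
    have hε0 : 0 < ε := by positivity
    have hε1 : ε ≤ 1 := min_le_left _ _
    have hε2 : ε ≤ 1 / (C0 * 125 + 1) := min_le_right _ _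
    have hlx : 0 ≤ Real.log x := Real.log_nonneg hx1
    have hx0' : (0:ℝ) ≤ x := by linarith
    have hrx : (0:ℝ) ≤ x ^ (q/3) := Real.rpow_nonneg hx0' _
    rw [Real.norm_eq_abs, Real.norm_eq_abs, abs_of_nonneg hlx, abs_of_nonneg hrx] at hx
    have h3 : (Real.log x) ^ 3 ≤ (ε * x ^ (q/3)) ^ 3 := pow_le_pow_left₀ hlx hx 3
    have h4 : (ε * x ^ (q/3)) ^ 3 = ε ^ 3 * x ^ q := by
      rw [mul_pow, ← Real.rpow_natCast (x ^ (q/3)) 3, ← Real.rpow_mul hx0']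
      norm_num
    have h5 : ε ^ 3 ≤ ε := by
      calc ε ^ 3 ≤ ε ^ 1 := pow_le_pow_of_le_one hε0.le hε1 (by norm_num)
        _ = ε := pow_one ε
    have hxq : (0:ℝ) ≤ x ^ q := Real.rpow_nonneg hx0' _
    have h6 : (Real.log x) ^ 3 ≤ ε * x ^ q := by
      calc (Real.log x) ^ 3 ≤ ε ^ 3 * x ^ q := by rw [← h4]; exact h3
        _ ≤ ε * x ^ q := mul_le_mul_of_nonneg_right h5 hxq
    have h7 : C0 * 125 * ε ≤ 1 := by
      have h7a : C0 * 125 * ε ≤ C0 * 125 * (1 / (C0 * 125 + 1)) :=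
        mul_le_mul_of_nonneg_left hε2 (by positivity)
      have h7b : C0 * 125 * (1 / (C0 * 125 + 1)) ≤ 1 := by
        rw [mul_one_div, div_le_one (by positivity)]
        linarith
      linarith
    calc C0 * 125 * (Real.log x) ^ 3 ≤ C0 * 125 * (ε * x ^ q) :=
        mul_le_mul_of_nonneg_left h6 (by positivity)
      _ = (C0 * 125 * ε) * x ^ q := by ring
      _ ≤ 1 * x ^ q := mul_le_mul_of_nonneg_right h7 hxq
      _ = x ^ q := one_mul _
  have hlogn : ∀ᶠ n : ℕ in atTop, C0 * 125 * (Real.log (n:ℝ)) ^ 3 ≤ (n:ℝ) ^ q :=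
    tendsto_natCast_atTop_atTop.eventually hlog
  filter_upwards [hlogn, eventually_ge_atTop 3] with n hlogx hn3
  set x : ℝ := (n : ℝ) with hxdef
  have hx3 : (3:ℝ) ≤ x := by rw [hxdef]; exact_mod_cast hn3
  have hx1 : (1:ℝ) ≤ x := by linarith
  have hx0 : (0:ℝ) < x := by linarith
  set lg : ℝ := ((Nat.log 2 (n + 1) : ℕ) : ℝ) with hlgdef
  set lgl : ℝ := ((Nat.log 2 (Nat.log 2 (n + 1) + 1) : ℕ) : ℝ) with hlgldef
  have hlg0 : 0 ≤ lg := Nat.cast_nonneg _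
  have hlgl0 : 0 ≤ lgl := Nat.cast_nonneg _
  have hlgllg : lgl ≤ lg := by
    have h1 : Nat.log 2 (n + 1) < n + 1 := Nat.log_lt_self 2 (by omega)
    have h2 : Nat.log 2 (Nat.log 2 (n + 1) + 1) ≤ Nat.log 2 (n + 1) :=
      Nat.log_mono_right (by omega)
    rw [hlgldef, hlgdef]
    exact_mod_cast h2
  set dl : ℝ := 2 * lgl + lg + (d:ℝ) + 3 with hdldef
  have hdl0 : 0 ≤ dl := by positivity
  have key1 : ((clen n + d + 2 : ℕ) : ℝ) = x + dl := by
    rw [hdldef, hlgdef, hlgldef, hxdef]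
    unfold clen
    push_cast
    ring
  have key2 : ((clen n + d : ℕ) : ℝ) = x + 2 * lgl + lg + (d:ℝ) + 1 := by
    rw [hlgdef, hlgldef, hxdef]
    unfold clen
    push_cast
    ring
  set E : ℝ := 2 * lgl + lg + (d:ℝ) + 2 with hEdef
  have hrhs : (2:ℝ) ^ (x - 1) * (x - 1) ^ Q * (2:ℝ) ^ (-((clen n + d : ℕ) : ℝ))
      = (x - 1) ^ Q * (2:ℝ) ^ (-E) := by
    rw [key2]
    rw [mul_comm ((2:ℝ) ^ (x - 1)) ((x - 1) ^ Q), mul_assoc, ← Real.rpow_add two_pos]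
    congr 1
    rw [hEdef]
    ring_nf
  rw [key1, hrhs]
  have hB := rpow_diff_le hx1 hdl0 hq0.le hq1
  refine le_trans hB ?_
  -- now: dl * x ^ (q - 1) ≤ (x - 1) ^ Q * 2 ^ (-E)
  have h2E : (0:ℝ) < (2:ℝ) ^ E := Real.rpow_pos_of_pos two_pos _
  rw [Real.rpow_neg two_pos.le, ← div_eq_mul_inv, le_div_iff₀ h2E]
  -- bound 2^E
  have e1 : (2:ℝ) ^ lg ≤ x + 1 := by
    rw [hlgdef, Real.rpow_natCast]
    have := Nat.pow_log_le_self 2 (show n + 1 ≠ 0 by omega)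
    calc ((2:ℝ) ^ Nat.log 2 (n + 1)) = ((2 ^ Nat.log 2 (n + 1) : ℕ) : ℝ) := by push_cast; ring
      _ ≤ ((n + 1 : ℕ) : ℝ) := by exact_mod_cast this
      _ = x + 1 := by push_cast; ring
  have e2 : (2:ℝ) ^ lgl ≤ lg + 1 := by
    rw [hlgldef, Real.rpow_natCast]
    have := Nat.pow_log_le_self 2 (show Nat.log 2 (n + 1) + 1 ≠ 0 by omega)
    calc ((2:ℝ) ^ Nat.log 2 (Nat.log 2 (n + 1) + 1))
        = ((2 ^ Nat.log 2 (Nat.log 2 (n + 1) + 1) : ℕ) : ℝ) := by push_cast; ring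
      _ ≤ ((Nat.log 2 (n + 1) + 1 : ℕ) : ℝ) := by exact_mod_cast this
      _ = lg + 1 := by rw [hlgdef]; push_cast; ring
  have h2lgl : (0:ℝ) < (2:ℝ) ^ lgl := Real.rpow_pos_of_pos two_pos _
  have h2lg : (0:ℝ) < (2:ℝ) ^ lg := Real.rpow_pos_of_pos two_pos _
  have h2d2 : (0:ℝ) < (2:ℝ) ^ ((d:ℝ) + 2) := Real.rpow_pos_of_pos two_pos _
  have eE : (2:ℝ) ^ E = (2:ℝ) ^ lgl * (2:ℝ) ^ lgl * (2:ℝ) ^ lg * (2:ℝ) ^ ((d:ℝ) + 2) := by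
    rw [← Real.rpow_add two_pos, ← Real.rpow_add two_pos, ← Real.rpow_add two_pos, hEdef]
    ring_nf
  have boundE : (2:ℝ) ^ E ≤ (lg + 1) * (lg + 1) * (x + 1) * (2:ℝ) ^ ((d:ℝ) + 2) := by
    rw [eE]
    have s1 : (2:ℝ) ^ lgl * (2:ℝ) ^ lgl ≤ (lg + 1) * (lg + 1) :=
      mul_le_mul e2 e2 h2lgl.le (by linarith)
    have s2 : (2:ℝ) ^ lgl * (2:ℝ) ^ lgl * (2:ℝ) ^ lg ≤ (lg + 1) * (lg + 1) * (x + 1) :=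
      mul_le_mul s1 e1 h2lg.le (by positivity)
    exact mul_le_mul_of_nonneg_right s2 h2d2.le
  have hxq1 : (0:ℝ) ≤ x ^ (q - 1) := Real.rpow_nonneg hx0.le _
  have hLHS : dl * x ^ (q - 1) * ((2:ℝ) ^ E)
      ≤ dl * x ^ (q - 1) * ((lg + 1) * (lg + 1) * (x + 1) * (2:ℝ) ^ ((d:ℝ) + 2)) := by
    apply mul_le_mul_of_nonneg_left boundE (by positivity)
  refine le_trans hLHS ?_
  -- bound dl
  have bdl : dl ≤ ((d:ℝ) + 6) * (lg + 1) := by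
    rw [hdldef]
    have hd0 : (0:ℝ) ≤ (d:ℝ) := Nat.cast_nonneg _
    have expand : ((d:ℝ) + 6) * (lg + 1) = (d:ℝ) * lg + 6 * lg + (d:ℝ) + 6 := by ring
    have hdlg : (0:ℝ) ≤ (d:ℝ) * lg := mul_nonneg hd0 hlg0
    linarith
  -- x^(q-1) facts
  have hxq1x : x ^ (q - 1) * x = x ^ q := by
    rw [← Real.rpow_add_one hx0.ne' (q - 1)]
    ring_nf
  have hxq1le : x ^ (q - 1) ≤ x ^ q := Real.rpow_le_rpow_of_exponent_le hx1 (by linarith)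
  have hxq0 : (0:ℝ) ≤ x ^ q := Real.rpow_nonneg hx0.le _
  have hxfac : x ^ (q - 1) * (x + 1) ≤ 2 * x ^ q := by
    have : x ^ (q - 1) * (x + 1) = x ^ (q - 1) * x + x ^ (q - 1) := by ring
    rw [this, hxq1x]
    linarith
  -- log bound : lg + 1 ≤ 5 * log x
  have hlogx1 : (1:ℝ) ≤ Real.log x := by
    rw [Real.le_log_iff_exp_le hx0]
    have := Real.exp_one_lt_d9
    linarith
  have hlgbound : lg + 1 ≤ 5 * Real.log x := by
    have s1 : lg ≤ Real.logb 2 ((n + 1 : ℕ) : ℝ) := by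
      rw [hlgdef]
      exact_mod_cast Real.natLog_le_logb (n + 1) 2
    have s2 : Real.logb 2 ((n + 1 : ℕ) : ℝ) = Real.log (x + 1) / Real.log 2 := by
      rw [Real.logb]
      congr 1
      push_cast
      ring
    have s3 : (1:ℝ)/2 ≤ Real.log 2 := by
      have := Real.log_two_gt_d9
      linarith
    have s4 : (0:ℝ) ≤ Real.log (x + 1) := Real.log_nonneg (by linarith)
    have s5 : Real.log (x + 1) / Real.log 2 ≤ 2 * Real.log (x + 1) := by
      rw [div_le_iff₀ (by linarith)]
      have hs5 : Real.log (x + 1) * 1 ≤ Real.log (x + 1) * (2 * Real.log 2) :=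
        mul_le_mul_of_nonneg_left (by linarith) s4
      linarith
    have s6 : Real.log (x + 1) ≤ 2 * Real.log x := by
      have hxx : x + 1 ≤ x ^ 2 := by
        have hmul : x * 3 ≤ x * x := mul_le_mul_of_nonneg_left hx3 hx0.le
        have hsq : x ^ 2 = x * x := sq x
        linarith
      calc Real.log (x + 1) ≤ Real.log (x ^ 2) := Real.log_le_log (by linarith) hxx
        _ = 2 * Real.log x := by rw [Real.log_pow]; push_cast; ring
    have : lg ≤ 4 * Real.log x := by
      calc lg ≤ Real.log (x + 1) / Real.log 2 := by rw [← s2]; exact s1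
        _ ≤ 2 * Real.log (x + 1) := s5
        _ ≤ 4 * Real.log x := by linarith
    linarith
  -- assemble
  have hcube : (lg + 1) * (lg + 1) * (lg + 1) ≤ 125 * (Real.log x) ^ 3 := by
    have h5x : 0 ≤ 5 * Real.log x := by linarith
    have := mul_le_mul (mul_le_mul hlgbound hlgbound (by linarith) h5x) hlgbound
      (by linarith) (by positivity)
    calc (lg + 1) * (lg + 1) * (lg + 1) ≤ 5 * Real.log x * (5 * Real.log x) * (5 * Real.log x) :=
        this
      _ = 125 * (Real.log x) ^ 3 := by ring
  have hd6 : (0:ℝ) ≤ (d:ℝ) + 6 := by positivity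
  have A1 : dl * x ^ (q - 1) ≤ (((d:ℝ) + 6) * (lg + 1)) * x ^ (q - 1) :=
    mul_le_mul_of_nonneg_right bdl hxq1
  have hlg1 : (0:ℝ) ≤ lg + 1 := by linarith
  have hfac : (0:ℝ) ≤ (lg + 1) * (lg + 1) * (x + 1) * (2:ℝ) ^ ((d:ℝ) + 2) := by positivity
  have A2 : dl * x ^ (q - 1) * ((lg + 1) * (lg + 1) * (x + 1) * (2:ℝ) ^ ((d:ℝ) + 2))
      ≤ (((d:ℝ) + 6) * (2:ℝ) ^ ((d:ℝ) + 2)) * ((lg + 1) * (lg + 1) * (lg + 1))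
        * (x ^ (q - 1) * (x + 1)) := by
    calc dl * x ^ (q - 1) * ((lg + 1) * (lg + 1) * (x + 1) * (2:ℝ) ^ ((d:ℝ) + 2))
        ≤ (((d:ℝ) + 6) * (lg + 1)) * x ^ (q - 1) *
            ((lg + 1) * (lg + 1) * (x + 1) * (2:ℝ) ^ ((d:ℝ) + 2)) :=
          mul_le_mul_of_nonneg_right A1 hfac
      _ = (((d:ℝ) + 6) * (2:ℝ) ^ ((d:ℝ) + 2)) * ((lg + 1) * (lg + 1) * (lg + 1))
            * (x ^ (q - 1) * (x + 1)) := by ring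
  have A3 : (((d:ℝ) + 6) * (2:ℝ) ^ ((d:ℝ) + 2)) * ((lg + 1) * (lg + 1) * (lg + 1))
        * (x ^ (q - 1) * (x + 1))
      ≤ (((d:ℝ) + 6) * (2:ℝ) ^ ((d:ℝ) + 2)) * (125 * (Real.log x) ^ 3) * (2 * x ^ q) := by
    apply mul_le_mul
    · exact mul_le_mul_of_nonneg_left hcube (by positivity)
    · exact hxfac
    · positivity
    · positivity
  have A4 : (((d:ℝ) + 6) * (2:ℝ) ^ ((d:ℝ) + 2)) * (125 * (Real.log x) ^ 3) * (2 * x ^ q)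
      = (C0 * 125 * (Real.log x) ^ 3) * x ^ q / 2 := by
    rw [hC0def]; ring
  have A5 : (C0 * 125 * (Real.log x) ^ 3) * x ^ q / 2 ≤ x ^ q * x ^ q / 2 := by
    have := mul_le_mul_of_nonneg_right hlogx hxq0
    linarith
  have A6 : x ^ q * x ^ q = x ^ Q' := by
    rw [← Real.rpow_add hx0, hqdef]; ring_nf
  have t1 : (1:ℝ) ≤ x - 1 := by linarith
  have t2 : (x - 1) ^ Q' ≤ (x - 1) ^ Q := Real.rpow_le_rpow_of_exponent_le t1 hQQ'
  have t4 : (x / 2) ^ Q' ≤ (x - 1) ^ Q' :=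
    Real.rpow_le_rpow (by positivity) (by linarith) hQ'0.le
  have t5 : (x / 2) ^ Q' = x ^ Q' / (2:ℝ) ^ Q' := Real.div_rpow hx0.le (by norm_num) Q'
  have t6 : (2:ℝ) ^ Q' ≤ 2 := by
    calc (2:ℝ) ^ Q' ≤ (2:ℝ) ^ (1:ℝ) := Real.rpow_le_rpow_of_exponent_le one_le_two hQ'1
      _ = 2 := Real.rpow_one 2
  have h2Q'pos : (0:ℝ) < (2:ℝ) ^ Q' := Real.rpow_pos_of_pos two_pos _
  have hxQ'0 : (0:ℝ) ≤ x ^ Q' := Real.rpow_nonneg hx0.le _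
  have t7 : x ^ Q' / 2 ≤ x ^ Q' / (2:ℝ) ^ Q' := by
    rw [div_le_div_iff₀ (by norm_num) h2Q'pos]
    calc x ^ Q' * (2:ℝ) ^ Q' ≤ x ^ Q' * 2 := mul_le_mul_of_nonneg_left t6 hxQ'0
      _ = x ^ Q' * 2 := rfl
  calc dl * x ^ (q - 1) * ((lg + 1) * (lg + 1) * (x + 1) * (2:ℝ) ^ ((d:ℝ) + 2))
      ≤ (((d:ℝ) + 6) * (2:ℝ) ^ ((d:ℝ) + 2)) * ((lg + 1) * (lg + 1) * (lg + 1))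
          * (x ^ (q - 1) * (x + 1)) := A2
    _ ≤ (((d:ℝ) + 6) * (2:ℝ) ^ ((d:ℝ) + 2)) * (125 * (Real.log x) ^ 3) * (2 * x ^ q) := A3
    _ = (C0 * 125 * (Real.log x) ^ 3) * x ^ q / 2 := A4
    _ ≤ x ^ q * x ^ q / 2 := A5
    _ = x ^ Q' / 2 := by rw [A6]
    _ ≤ x ^ Q' / (2:ℝ) ^ Q' := t7
    _ = (x / 2) ^ Q' := t5.symm
    _ ≤ (x - 1) ^ Q' := t4
    _ ≤ (x - 1) ^ Q := t2

end WNS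

/-- **Theorem (paper Thm 3(ii)).** For real `Q > 0` and `D ≥ 1`,
`W(Q,D) = ∑_{p ∈ dom U} |p|^Q·2^{-|p|/D}` diverges to infinity. -/
theorem W_not_summable (U : Computer) (hU : IsOptimal U)
    (Q D : ℝ) (hQpos : 0 < Q) (hD : 1 ≤ D) :
    ¬ Summable (wterm U Q D) := by
  classical
  intro hsum
  obtain ⟨d, hd⟩ := hU WNS.CC
  have hpmem : ∀ s : List Bool, s ∈ WNS.CC.f (WNS.code s) := by
    intro s
    show s ∈ ((WNS.parse (WNS.code s) : Option (List Bool)) : Part (List Bool))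
    rw [Part.mem_ofOption, WNS.parse_code]
    rfl
  have hdom : ∀ s : List Bool, (WNS.CC.f (WNS.code s)).Dom :=
    fun s => Part.dom_iff_mem.mpr ⟨s, hpmem s⟩
  choose g hglen hgsub using fun s => hd (WNS.code s) (hdom s)
  have hgmem : ∀ s, s ∈ U.f (g s) := fun s => hgsub s s (hpmem s)
  have hglen' : ∀ s, (g s).length ≤ WNS.clen s.length + d := by
    intro s
    have := hglen s
    rwa [WNS.code_length'] at this
  have hwpos : ∀ p : ↥U.domain, 0 ≤ wterm U Q D p := by
    intro p
    unfold wterm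
    positivity
  set q : ℝ := min Q 1 / 2 with hqdef
  have hq0 : 0 < q := by
    have : 0 < min Q 1 := lt_min hQpos one_pos
    rw [hqdef]; linarith
  obtain ⟨N0, hN0⟩ := Filter.eventually_atTop.mp (WNS.eventual_ineq d Q hQpos)
  set N := max N0 2 with hNdef
  have hN2 : 2 ≤ N := le_max_right _ _
  -- the sequence of block positions
  set nseq : ℕ → ℕ := fun k => Nat.rec N (fun _ m => WNS.clen m + d + 2) k with hnseq
  have nseq0 : nseq 0 = N := rfl
  have nseqS : ∀ k, nseq (k + 1) = WNS.clen (nseq k) + d + 2 := fun k => rfl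
  have nseq_step : ∀ k, nseq k + 2 ≤ nseq (k + 1) := by
    intro k
    rw [nseqS]
    have := WNS.clen_ge (nseq k)
    omega
  have nseq_mono : Monotone nseq := monotone_nat_of_le_succ (fun k => by
    have := nseq_step k; omega)
  have nseq_geN : ∀ k, N ≤ nseq k := fun k => nseq0 ▸ nseq_mono (Nat.zero_le k)
  have nseq_ge2 : ∀ k, 2 ≤ nseq k := fun k => le_trans hN2 (nseq_geN k)
  have nseq_lin : ∀ k, 2 * k ≤ nseq k := by
    intro k
    induction k with
    | zero => omega
    | succ k ih =>
        have := nseq_step k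
        omega
  -- blocks
  have hblocks : ∀ k : ℕ, ∃ F : Finset ↥U.domain,
      (∀ px ∈ F, nseq k - 1 ≤ (px : List Bool).length ∧
        (px : List Bool).length ≤ WNS.clen (nseq k) + d) ∧
      ((nseq (k + 1) : ℝ) ^ q - (nseq k : ℝ) ^ q ≤ ∑ px ∈ F, wterm U Q D px) := by
    intro k
    set n := nseq k with hn
    obtain ⟨A, hAprop, hAcard⟩ := WNS.counting U d g hgmem hglen' n (nseq_ge2 k)
    have hAdom : ∀ p ∈ A, p ∈ U.domain := fun p hp => (hAprop p hp).1
    set F : Finset ↥U.domain := A.subtype (· ∈ U.domain) with hF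
    have hFmem : ∀ px : ↥U.domain, px ∈ F ↔ (px : List Bool) ∈ A := by
      intro px
      rw [hF, Finset.mem_subtype]
    have hFcard : F.card = A.card := by
      rw [hF, Finset.card_subtype, Finset.filter_true_of_mem hAdom]
    refine ⟨F, ?_, ?_⟩
    · intro px hpx
      have := hAprop _ ((hFmem px).mp hpx)
      exact ⟨this.2.1, this.2.2⟩
    · -- the sum bound
      set M : ℕ := WNS.clen n + d with hM
      set c : ℝ := ((n : ℝ) - 1) ^ Q * (2:ℝ) ^ (-((M : ℕ) : ℝ)) with hc
      have hn2 : 2 ≤ n := nseq_ge2 k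
      have hc0 : 0 ≤ c := by
        rw [hc]
        have : (0:ℝ) ≤ (n : ℝ) - 1 := by
          have : (2:ℝ) ≤ (n:ℝ) := by exact_mod_cast hn2
          linarith
        positivity
      have hterm : ∀ px ∈ F, c ≤ wterm U Q D px := by
        intro px hpx
        obtain ⟨hp1, hp2⟩ := (fun h => ⟨(hAprop _ h).2.1, (hAprop _ h).2.2⟩ :
          (px : List Bool) ∈ A → n - 1 ≤ (px : List Bool).length ∧
            (px : List Bool).length ≤ M) ((hFmem px).mp hpx)
        set L : ℝ := ((px : List Bool).length : ℝ) with hL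
        have hL0 : 0 ≤ L := Nat.cast_nonneg _
        have hLn : (n : ℝ) - 1 ≤ L := by
          have h1 : ((n - 1 : ℕ) : ℝ) ≤ L := by rw [hL]; exact_mod_cast hp1
          have h2 : ((n - 1 : ℕ) : ℝ) = (n : ℝ) - 1 := by
            rw [Nat.cast_sub (by omega)]
            norm_num
          linarith
        have hLM : L ≤ (M : ℝ) := by rw [hL]; exact_mod_cast hp2
        have hn1 : (0:ℝ) ≤ (n : ℝ) - 1 := by
          have : (2:ℝ) ≤ (n:ℝ) := by exact_mod_cast hn2
          linarith
        have part1 : ((n : ℝ) - 1) ^ Q ≤ L ^ Q := Real.rpow_le_rpow hn1 hLn hQpos.le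
        have hD0 : (0:ℝ) < D := lt_of_lt_of_le one_pos hD
        have hexp : -(((M : ℕ)) : ℝ) ≤ -L / D := by
          have e1 : L / D ≤ L := div_le_self hL0 hD
          have e2 : L / D ≤ (M : ℝ) := le_trans e1 hLM
          have : -L / D = -(L / D) := by ring
          rw [this]
          linarith
        have part2 : (2:ℝ) ^ (-(((M : ℕ)) : ℝ)) ≤ (2:ℝ) ^ (-L / D) :=
          Real.rpow_le_rpow_of_exponent_le one_le_two hexp
        show c ≤ L ^ Q * (2:ℝ) ^ (-L / D)
        rw [hc]
        exact mul_le_mul part1 part2 (Real.rpow_nonneg (by norm_num) _)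
          (Real.rpow_nonneg hL0 _)
      have hsumF : (F.card : ℝ) * c ≤ ∑ px ∈ F, wterm U Q D px := by
        have := Finset.card_nsmul_le_sum F (wterm U Q D) c hterm
        rwa [nsmul_eq_mul] at this
      have hcardF : ((2 ^ (n - 1) : ℕ) : ℝ) ≤ (F.card : ℝ) := by
        rw [hFcard]
        exact_mod_cast hAcard
      have hlower : ((2 ^ (n - 1) : ℕ) : ℝ) * c ≤ ∑ px ∈ F, wterm U Q D px :=
        le_trans (mul_le_mul_of_nonneg_right hcardF hc0) hsumF
      have hpow : ((2 ^ (n - 1) : ℕ) : ℝ) = (2:ℝ) ^ ((n : ℝ) - 1) := by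
        push_cast
        rw [← Real.rpow_natCast 2 (n - 1)]
        congr 1
        rw [Nat.cast_sub (by omega)]
        norm_num
      have hNn : N0 ≤ n := le_trans (le_max_left _ _) (nseq_geN k)
      have hineq := hN0 n hNn
      have hcast : ((nseq (k + 1) : ℕ) : ℝ) = ((WNS.clen n + d + 2 : ℕ) : ℝ) := by
        rw [nseqS k, hn]
      calc (nseq (k + 1) : ℝ) ^ q - (n : ℝ) ^ q
          = ((WNS.clen n + d + 2 : ℕ) : ℝ) ^ q - (n : ℝ) ^ q := by rw [hcast]
        _ ≤ (2:ℝ) ^ ((n:ℝ) - 1) * ((n:ℝ) - 1) ^ Q *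
              (2:ℝ) ^ (-((WNS.clen n + d : ℕ) : ℝ)) := hineq
        _ = ((2 ^ (n - 1) : ℕ) : ℝ) * c := by rw [hpow, hc, hM]; ring
        _ ≤ ∑ px ∈ F, wterm U Q D px := hlower
  choose F hF1 hF2 using hblocks
  -- disjointness of the blocks
  have hdisj : ∀ j k : ℕ, j < k → Disjoint (F j) (F k) := by
    intro j k hjk
    rw [Finset.disjoint_left]
    intro px hpxj hpxk
    have h1 := (hF1 j px hpxj).2
    have h2 := (hF1 k px hpxk).1
    have h3 : WNS.clen (nseq j) + d + 2 = nseq (j + 1) := (nseqS j).symm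
    have h4 : nseq (j + 1) ≤ nseq k := nseq_mono hjk
    have h5 := nseq_ge2 k
    omega
  -- partial sums are bounded by the tsum
  have key : ∀ K : ℕ, (nseq K : ℝ) ^ q - (N : ℝ) ^ q ≤ ∑' p, wterm U Q D p := by
    intro K
    have hpd : (↑(Finset.range K) : Set ℕ).PairwiseDisjoint F := by
      intro a _ b _ hab
      rcases Nat.lt_or_ge a b with h | h
      · exact hdisj a b h
      · exact (hdisj b a (by omega)).symm
    have hsum1 : ∑ k ∈ Finset.range K, ((nseq (k + 1) : ℝ) ^ q - (nseq k : ℝ) ^ q)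
        ≤ ∑ k ∈ Finset.range K, ∑ px ∈ F k, wterm U Q D px :=
      Finset.sum_le_sum (fun k _ => hF2 k)
    rw [Finset.sum_range_sub (fun k => (nseq k : ℝ) ^ q)] at hsum1
    have hsum2 : ∑ k ∈ Finset.range K, ∑ px ∈ F k, wterm U Q D px
        = ∑ px ∈ (Finset.range K).biUnion F, wterm U Q D px :=
      (Finset.sum_biUnion hpd).symm
    have hsum3 : ∑ px ∈ (Finset.range K).biUnion F, wterm U Q D px
        ≤ ∑' p, wterm U Q D p :=
      Summable.sum_le_tsum _ (fun i _ => hwpos i) hsum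
    rw [nseq0] at hsum1
    linarith
  -- contradiction with divergence of (2K)^q
  have hub : ∀ K : ℕ, ((2 * K : ℕ) : ℝ) ^ q ≤ (∑' p, wterm U Q D p) + (N : ℝ) ^ q := by
    intro K
    have h1 : ((2 * K : ℕ) : ℝ) ≤ ((nseq K : ℕ) : ℝ) := by exact_mod_cast nseq_lin K
    have h2 : ((2 * K : ℕ) : ℝ) ^ q ≤ ((nseq K : ℕ) : ℝ) ^ q :=
      Real.rpow_le_rpow (Nat.cast_nonneg _) h1 hq0.le
    have h3 := key K
    linarith
  have htend : Tendsto (fun K : ℕ => ((2 * K : ℕ) : ℝ) ^ q) atTop atTop := by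
    apply (tendsto_rpow_atTop hq0).comp
    apply tendsto_natCast_atTop_atTop.comp
    apply Filter.tendsto_atTop_mono (fun K => by omega : ∀ K : ℕ, K ≤ 2 * K)
    exact Filter.tendsto_id
  obtain ⟨K, hK⟩ :=
    (htend.eventually_gt_atTop ((∑' p, wterm U Q D p) + (N : ℝ) ^ q)).exists
  exact absurd (hub K) (not_le.mpr hK)
end

section
/- Let T be a real number with T > 1. Then the series Z(T) = ∑_{p ∈ dom U} 2^{−|p|/T} diverges to ∞ (equivalently, the family of its nonnegative terms is not summable). -/
open Filter

def decodeG (p : List Bool) : Option (List Bool) :=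
  if p = (List.range (Nat.sqrt p.length)).map (fun _ => true) ++
      false :: (List.range (Nat.sqrt p.length * Nat.sqrt p.length)).map
        (fun i => p.getD (Nat.sqrt p.length + 1 + i) true)
  then some ((List.range (Nat.sqrt p.length * Nat.sqrt p.length)).map
        (fun i => p.getD (Nat.sqrt p.length + 1 + i) true))
  else none

lemma decodeG_computable : Computable decodeG := by
  have h1 : Primrec (fun p : List Bool => Nat.sqrt p.length) :=
    Primrec.nat_sqrt.comp Primrec.list_length
  have hrep : Primrec (fun p : List Bool =>
      (List.range (Nat.sqrt p.length)).map (fun _ => true)) :=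
    Primrec.list_map (Primrec.list_range.comp h1) ((Primrec.const true).to₂)
  have hg : Primrec₂ (fun (p : List Bool) (i : ℕ) =>
      p.getD (Nat.sqrt p.length + 1 + i) true) :=
    Primrec.to₂ <| (Primrec.list_getD true).comp Primrec.fst
      (Primrec.nat_add.comp
        (Primrec.nat_add.comp (h1.comp Primrec.fst) (Primrec.const 1)) Primrec.snd)
  have htail : Primrec (fun p : List Bool =>
      (List.range (Nat.sqrt p.length * Nat.sqrt p.length)).map
        (fun i => p.getD (Nat.sqrt p.length + 1 + i) true)) :=
    Primrec.list_map (Primrec.list_range.comp (Primrec.nat_mul.comp h1 h1)) hg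
  have hrhs : Primrec (fun p : List Bool =>
      (List.range (Nat.sqrt p.length)).map (fun _ => true) ++
        false :: (List.range (Nat.sqrt p.length * Nat.sqrt p.length)).map
          (fun i => p.getD (Nat.sqrt p.length + 1 + i) true)) :=
    Primrec.list_append.comp hrep
      (Primrec.list_cons.comp (Primrec.const false) htail)
  have hcond : PrimrecPred (fun p : List Bool =>
      p = (List.range (Nat.sqrt p.length)).map (fun _ => true) ++
        false :: (List.range (Nat.sqrt p.length * Nat.sqrt p.length)).map
          (fun i => p.getD (Nat.sqrt p.length + 1 + i) true)) :=
    Primrec.eq.comp Primrec.id hrhs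
  exact (Primrec.ite hcond (Primrec.option_some.comp htail)
    (Primrec.const none)).to_comp

lemma map_getD_range (d : Bool) : ∀ s : List Bool,
    (List.range s.length).map (fun i => s.getD i d) = s
  | [] => rfl
  | a :: t => by
    rw [List.length_cons, List.range_succ_eq_map, List.map_cons, List.map_map]
    have : ((fun i => (a :: t).getD i d) ∘ Nat.succ) = fun i => t.getD i d := by
      funext i; simp [List.getD_cons_succ]
    rw [this, map_getD_range d t]
    simp [List.getD_cons_zero]

lemma sqrt_special {k : ℕ} (hk : 1 ≤ k) : Nat.sqrt (k * k + k + 1) = k := by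
  refine le_antisymm ?_ (Nat.le_sqrt.mpr (by omega))
  have h : k * k + k + 1 < (k + 1) * (k + 1) := by nlinarith
  have := Nat.sqrt_lt.mpr h
  omega

lemma range_map_const (k : ℕ) :
    (List.range k).map (fun _ : ℕ => true) = List.replicate k true := by
  simp [List.map_const']

lemma decodeG_encode {k : ℕ} (hk : 1 ≤ k) {s : List Bool} (hs : s.length = k * k) :
    decodeG (List.replicate k true ++ false :: s) = some s := by
  set p := List.replicate k true ++ false :: s with hp
  have hlen : p.length = k * k + k + 1 := by simp [hp, hs]; ring
  have hsq : Nat.sqrt p.length = k := by rw [hlen]; exact sqrt_special hk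
  have hgetD : ∀ i : ℕ, p.getD (k + 1 + i) true = s.getD i true := by
    intro i
    rw [hp, List.getD_append_right _ _ _ _ (by simp; omega : (List.replicate k true).length ≤ k + 1 + i)]
    have : k + 1 + i - (List.replicate k true).length = i + 1 := by simp; omega
    rw [this, List.getD_cons_succ]
  have htail : (List.range (Nat.sqrt p.length * Nat.sqrt p.length)).map
      (fun i => p.getD (Nat.sqrt p.length + 1 + i) true) = s := by
    rw [hsq]
    have : (List.range (k * k)).map (fun i => p.getD (k + 1 + i) true)
        = (List.range (k * k)).map (fun i => s.getD i true) := by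
      apply List.map_congr_left; intro i _; exact hgetD i
    rw [this, ← hs, map_getD_range]
  rw [decodeG]
  rw [if_pos]
  · rw [htail]
  · rw [htail, hsq, range_map_const]

lemma decodeG_structure {p s : List Bool} (h : decodeG p = some s) :
    p = List.replicate (Nat.sqrt p.length) true ++ false :: s ∧
      s.length = Nat.sqrt p.length * Nat.sqrt p.length := by
  unfold decodeG at h
  split at h
  case isTrue cond =>
    injection h with h'
    rw [range_map_const] at cond
    rw [h'] at cond
    refine ⟨cond, ?_⟩
    rw [← h']; simp
  case isFalse => exact absurd h (by simp)

lemma dom_ofOption {α : Type*} {o : Option α} :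
    (Part.ofOption o).Dom ↔ ∃ a, o = some a := by
  cases o <;> simp [Part.ofOption]

lemma firstFalse {k : ℕ} {s q : List Bool} (hq : q = List.replicate k true ++ false :: s) :
    q[k]? = some false ∧ ∀ i < k, q[i]? = some true := by
  subst hq
  constructor
  · rw [List.getElem?_append_right (by simp)]
    simp
  · intro i hi
    rw [List.getElem?_append_left (by simpa using hi)]
    simp [hi]

lemma prefix_getElem? {p q : List Bool} (h : p <+: q) {i : ℕ} (hi : i < p.length) :
    q[i]? = p[i]? := by
  obtain ⟨r, rfl⟩ := h
  rw [List.getElem?_append_left hi]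

lemma decodeG_prefixFree : PrefixFree {p | (Part.ofOption (decodeG p)).Dom} := by
  intro p hp q hq hpre
  obtain ⟨s, hs⟩ := dom_ofOption.mp hp
  obtain ⟨t, ht⟩ := dom_ofOption.mp hq
  obtain ⟨hps, hsl⟩ := decodeG_structure hs
  obtain ⟨hqt, htl⟩ := decodeG_structure ht
  set kp := Nat.sqrt p.length
  set kq := Nat.sqrt q.length
  have hplen : p.length = kp + (1 + s.length) := by rw [hps]; simp; ring
  have hqlen : q.length = kq + (1 + t.length) := by rw [hqt]; simp; ring
  have hkp_lt : kp < p.length := by omega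
  obtain ⟨hp0, hp1⟩ := firstFalse hps
  obtain ⟨hq0, hq1⟩ := firstFalse hqt
  have hkk : kp = kq := by
    rcases lt_trichotomy kp kq with h | h | h
    · have := prefix_getElem? hpre hkp_lt
      rw [hp0, hq1 kp h] at this
      simp at this
    · exact h
    · have hkq_lt : kq < p.length := lt_trans h hkp_lt
      have := prefix_getElem? hpre hkq_lt
      rw [hp1 kq h, hq0] at this
      simp at this
  have hst : s.length = t.length := by rw [hsl, htl, hkk]
  have hlen : p.length = q.length := by omega
  exact hpre.eq_of_length hlen

/-- **Theorem (paper Thm 8(ii)).** For real `T > 1`, the partition function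
`Z(T) = ∑_{p ∈ dom U} 2^{-|p|/T}` diverges to infinity. -/
theorem Z_not_summable (U : Computer) (hU : IsOptimal U)
    (T : ℝ) (hT : 1 < T) :
    ¬ Summable (zterm U T) := by
  intro hsum
  classical
  obtain ⟨Z, hZdef⟩ : ∃ Z : ℝ, Z = ∑' p, zterm U T p := ⟨_, rfl⟩
  have hT0 : (0:ℝ) < T := by linarith
  have hpos : ∀ p : U.domain, 0 < zterm U T p := fun p =>
    Real.rpow_pos_of_pos two_pos _
  have hZ0 : 0 ≤ Z := hZdef ▸ tsum_nonneg fun p => (hpos p).le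
  let Cg : Computer :=
    { f := fun p => Part.ofOption (decodeG p)
      partrec := Computable.ofOption decodeG_computable
      prefixFree := decodeG_prefixFree }
  obtain ⟨d, hd⟩ := hU Cg
  have key : ∀ k : ℕ, 1 ≤ k →
      (2:ℝ) ^ ((k*k : ℕ) : ℝ) * (2:ℝ) ^ (-(((k*k+k+1+d : ℕ)):ℝ)/T) ≤ Z := by
    intro k hk
    rw [hZdef]
    have hF : ∀ v : Fin (k*k) → Bool, ∃ p' : U.domain,
        List.ofFn v ∈ U.f p'.val ∧ p'.val.length ≤ k*k+k+1+d := by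
      intro v
      have hsl : (List.ofFn v).length = k*k := List.length_ofFn
      have hdec := decodeG_encode hk hsl
      have hdom : (Cg.f (List.replicate k true ++ false :: List.ofFn v)).Dom := by
        show (Part.ofOption _).Dom
        exact dom_ofOption.mpr ⟨_, hdec⟩
      obtain ⟨p', hlen, hmem⟩ := hd _ hdom
      have hmm : List.ofFn v ∈ U.f p' := by
        apply hmem
        show List.ofFn v ∈ Part.ofOption (decodeG _)
        rw [hdec]
        exact Part.mem_ofOption.mpr rfl
      refine ⟨⟨p', Part.dom_iff_mem.mpr ⟨_, hmm⟩⟩, hmm, ?_⟩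
      calc p'.length ≤ (List.replicate k true ++ false :: List.ofFn v).length + d := hlen
        _ = k*k+k+1+d := by simp [hsl]; ring
    choose F hF1 hF2 using hF
    have Finj : Function.Injective F := by
      intro v w h
      apply List.ofFn_injective
      exact Part.mem_unique (hF1 v) (h ▸ hF1 w)
    have hterm : ∀ v : Fin (k*k) → Bool,
        (2:ℝ) ^ (-(((k*k+k+1+d : ℕ)):ℝ)/T) ≤ zterm U T (F v) := by
      intro v
      show _ ≤ (2:ℝ) ^ (-(((F v : List Bool).length : ℕ):ℝ)/T)
      apply (Real.rpow_le_rpow_left_iff one_lt_two).mpr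
      have hle : (((F v : List Bool).length : ℕ):ℝ) ≤ (((k*k+k+1+d : ℕ)):ℝ) := by
        exact_mod_cast hF2 v
      have := neg_le_neg hle
      exact div_le_div_of_nonneg_right this hT0.le |>.trans_eq rfl
    set S : Finset U.domain := Finset.univ.map ⟨F, Finj⟩ with hS
    have hbig : S.card • ((2:ℝ) ^ (-(((k*k+k+1+d : ℕ)):ℝ)/T)) ≤ ∑ p ∈ S, zterm U T p := by
      apply Finset.card_nsmul_le_sum
      intro p hp
      rw [hS, Finset.mem_map] at hp
      obtain ⟨v, _, rfl⟩ := hp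
      exact hterm v
    have hle : ∑ p ∈ S, zterm U T p ≤ ∑' p : U.domain, zterm U T p :=
      hsum.sum_le_tsum _ (fun i _ => (hpos i).le)
    have hcard : S.card = 2^(k*k) := by
      rw [hS, Finset.card_map, Finset.card_univ]
      simp
    rw [hcard] at hbig
    have h2 : (2:ℝ) ^ ((k*k:ℕ):ℝ) = ((2^(k*k) : ℕ) : ℝ) := by
      rw [Real.rpow_natCast]
      push_cast
      ring
    rw [h2, ← nsmul_eq_mul]
    exact hbig.trans hle
  have ha : 0 < 1 - 1/T := by
    have : 1/T < 1 := by rw [div_lt_one hT0]; exact hT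
    linarith
  obtain ⟨k0, hk0⟩ := exists_nat_ge ((2*Z + 5 + d)/(1 - 1/T))
  set k := max k0 1 with hkdef
  have hk1 : 1 ≤ k := le_max_right _ _
  have hkr1 : (1:ℝ) ≤ (k:ℝ) := by exact_mod_cast hk1
  have hkk0 : (k0:ℝ) ≤ (k:ℝ) := by exact_mod_cast le_max_left k0 1
  have hak : (2*Z + 5 + (d:ℝ)) ≤ (1 - 1/T) * k := by
    have h1 : (2*Z + 5 + (d:ℝ))/(1 - 1/T) ≤ (k:ℝ) := hk0.trans hkk0
    have h2 := mul_le_mul_of_nonneg_right h1 ha.le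
    rw [div_mul_cancel₀ _ (ne_of_gt ha)] at h2
    linarith
  have hkey := key k hk1
  have hE : (2:ℝ) ^ (((k*k:ℕ):ℝ) - (((k*k+k+1+d : ℕ)):ℝ)/T) ≤ Z := by
    rw [sub_eq_add_neg, Real.rpow_add two_pos, ← neg_div]
    exact hkey
  obtain ⟨e, hedef⟩ : ∃ e : ℝ, e = ((k*k:ℕ):ℝ) - (((k*k+k+1+d : ℕ)):ℝ)/T := ⟨_, rfl⟩
  rw [← hedef] at hE
  have he : 2*Z + 2 ≤ e := by
    have hN : (((k*k+k+1+d : ℕ)):ℝ) = (k:ℝ)*(k:ℝ) + (k:ℝ) + 1 + (d:ℝ) := by push_cast; ring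
    have hd0 : (0:ℝ) ≤ (d:ℝ) := Nat.cast_nonneg d
    have hsplit : (((k*k+k+1+d : ℕ)):ℝ)/T ≤ (k:ℝ)*(k:ℝ)/T + ((k:ℝ)+1+(d:ℝ)) := by
      rw [hN]
      have h1 : ((k:ℝ)+1+(d:ℝ))/T ≤ (k:ℝ)+1+(d:ℝ) := div_le_self (by positivity) hT.le
      calc ((k:ℝ)*(k:ℝ) + (k:ℝ) + 1 + (d:ℝ))/T
          = (k:ℝ)*(k:ℝ)/T + ((k:ℝ)+1+(d:ℝ))/T := by ring
        _ ≤ _ := by linarith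
    have hq : ((k*k:ℕ):ℝ) = (k:ℝ)*(k:ℝ) := by push_cast; ring
    have h2 : (2*Z+5+(d:ℝ))*(k:ℝ) ≤ (1-1/T)*((k:ℝ)*(k:ℝ)) := by
      have := mul_le_mul_of_nonneg_right hak (by linarith : (0:ℝ) ≤ (k:ℝ))
      linarith
    have h3 : (1-1/T)*((k:ℝ)*(k:ℝ)) - ((k:ℝ)+1+(d:ℝ)) ≤ e := by
      rw [hedef, hq]
      have : (1-1/T)*((k:ℝ)*(k:ℝ)) = (k:ℝ)*(k:ℝ) - (k:ℝ)*(k:ℝ)/T := by ring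
      linarith
    have h4 : (2*Z+5+(d:ℝ))*(k:ℝ) - ((k:ℝ)+1+(d:ℝ)) ≤ e := by linarith
    have h5 : (0:ℝ) ≤ ((k:ℝ)-1) * (2*Z+4+(d:ℝ)) :=
      mul_nonneg (by linarith) (by linarith)
    linarith [h4, h5]
  have hexp : e/2 + 1 ≤ (2:ℝ)^e := by
    rw [Real.rpow_def_of_pos two_pos]
    have h1 := Real.add_one_le_exp (Real.log 2 * e)
    have hlog : (0.5:ℝ) < Real.log 2 := by
      have := Real.log_two_gt_d9
      linarith
    have he0 : 0 ≤ e := by linarith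
    have h5 : (0:ℝ) ≤ (Real.log 2 - 0.5) * e :=
      mul_nonneg (by linarith) he0
    linarith [h1, h5]
  linarith
end

section
/- Let T be a real number with T ≥ 1, and let q₁, q₂, q₃, … be any enumeration (a bijection from ℕ⁺) of the countably infinite set dom U. Writing Z_n(T) = ∑_{i=1}^n 2^{−|q_i|/T}, W_n(T) = ∑_{i=1}^n |q_i|·2^{−|q_i|/T}, and S_n(T) = (1/T)·(W_n(T)/Z_n(T)) + log₂ Z_n(T), the finite-stage entropies S_n(T) diverge to ∞ as n → ∞. -/
open Filter

namespace FSE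

/-- index of first `true` -/
def fi (p : List Bool) : ℕ := p.findIdx id

def ok (p : List Bool) : Bool := p.length == 2 ^ fi p + fi p + 1

def out (p : List Bool) : List Bool :=
  (List.range (2 ^ fi p)).map fun i => p.getD (fi p + 1 + i) true

def g (p : List Bool) : Option (List Bool) := bif ok p then some (out p) else none

theorem fi_primrec : Primrec fi := Primrec.list_findIdx .id Primrec₂.right

theorem nat_pow_primrec : Primrec₂ ((· ^ ·) : ℕ → ℕ → ℕ) :=
  Primrec₂.unpaired'.1 Nat.Primrec.pow

theorem ok_primrec : Primrec ok :=
  Primrec.beq.comp Primrec.list_length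
    (Primrec.nat_add.comp
      (Primrec.nat_add.comp (nat_pow_primrec.comp (Primrec.const 2) fi_primrec) fi_primrec)
      (Primrec.const 1))

theorem out_primrec : Primrec out :=
  Primrec.list_map
    (Primrec.list_range.comp (nat_pow_primrec.comp (Primrec.const 2) fi_primrec))
    ((Primrec.list_getD true).comp₂ Primrec.fst
      ((Primrec.nat_add.comp
        (Primrec.nat_add.comp (fi_primrec.comp Primrec.fst) (Primrec.const 1))
        Primrec.snd).to₂))

theorem g_primrec : Primrec g :=
  Primrec.cond ok_primrec (Primrec.option_some.comp out_primrec) (Primrec.const none)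

def Cf : List Bool →. List Bool := fun p => (g p : Part (List Bool))

theorem Cf_partrec : Partrec Cf := Computable.ofOption g_primrec.to_comp

theorem Cf_dom_iff {p : List Bool} : (Cf p).Dom ↔ ok p = true := by
  unfold Cf g
  cases h : ok p <;> simp [h, Part.ofOption]

def enc (k : ℕ) (s : List Bool) : List Bool := List.replicate k false ++ true :: s

theorem fi_enc (k : ℕ) (s : List Bool) : fi (enc k s) = k := by
  unfold fi enc
  rw [List.findIdx_append]
  have h1 : List.findIdx id (List.replicate k false) = k := by
    induction k with
    | zero => simp
    | succ n ih => simpa [List.replicate_succ, List.findIdx_cons] using ih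
  simp [h1, List.findIdx_cons]

theorem enc_length (k : ℕ) (s : List Bool) : (enc k s).length = k + 1 + s.length := by
  simp [enc]; ring

theorem ok_enc {k : ℕ} {s : List Bool} (hs : s.length = 2 ^ k) : ok (enc k s) = true := by
  simp [ok, fi_enc, enc_length, hs]; ring

theorem out_enc {k : ℕ} {s : List Bool} (hs : s.length = 2 ^ k) : out (enc k s) = s := by
  unfold out
  rw [fi_enc]
  apply List.ext_getElem
  · simp [hs]
  · intro i h1 h2
    simp only [List.getElem_map, List.getElem_range]
    have hlen : i < 2 ^ k := by simpa using h1
    have : (enc k s).getD (k + 1 + i) true = s.getD i true := by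
      unfold enc
      rw [List.getD_append_right _ _ _ _ (by simp [Nat.le_add_right]; omega)]
      simp only [List.length_replicate]
      have : k + 1 + i - k = i + 1 := by omega
      rw [this]
      rfl
    rw [this, List.getD_eq_getElem _ _ (by omega)]

theorem mem_Cf_enc {k : ℕ} {s : List Bool} (hs : s.length = 2 ^ k) : s ∈ Cf (enc k s) := by
  unfold Cf g
  rw [ok_enc hs, out_enc hs]
  simp [Part.ofOption]

theorem Cf_prefixFree : PrefixFree {p | (Cf p).Dom} := by
  intro p hp q hq hpq
  rw [Set.mem_setOf_eq, Cf_dom_iff] at hp hq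
  unfold ok at hp hq
  have hp' : p.length = 2 ^ fi p + fi p + 1 := by simpa using hp
  have hq' : q.length = 2 ^ fi q + fi q + 1 := by simpa using hq
  obtain ⟨t, ht⟩ := hpq
  have hfi : fi q = fi p := by
    unfold fi at *
    rw [← ht, List.findIdx_append, if_pos]
    have h2 : fi p < p.length := by
      unfold fi; rw [hp']
      have := Nat.one_le_two_pow (n := fi p)
      unfold fi at *; omega
    exact h2
  apply List.IsPrefix.eq_of_length ⟨t, ht⟩
  rw [hp', hq', hfi]

def C : Computer := ⟨Cf, Cf_partrec, Cf_prefixFree⟩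

theorem C_dom_enc {k : ℕ} {s : List Bool} (hs : s.length = 2 ^ k) : (C.f (enc k s)).Dom :=
  Part.dom_iff_mem.2 ⟨s, mem_Cf_enc hs⟩


/-- binary value with leading 1 -/
def e (l : List Bool) : ℕ := l.foldl (fun a b => 2 * a + cond b 1 0) 1

theorem e_append (l : List Bool) (b : Bool) : e (l ++ [b]) = 2 * e l + cond b 1 0 := by
  simp [e, List.foldl_append]

theorem e_bounds (l : List Bool) : 2 ^ l.length ≤ e l ∧ e l < 2 ^ (l.length + 1) := by
  induction l using List.reverseRecOn with
  | nil => simp [e]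
  | append_singleton l b ih =>
    rw [e_append]
    have h1 : (l ++ [b]).length = l.length + 1 := by simp
    rw [h1]
    have h2 : (2:ℕ) ^ (l.length + 1) = 2 * 2 ^ l.length := by ring
    have h3 : (2:ℕ) ^ (l.length + 1 + 1) = 2 * 2 ^ (l.length + 1) := by ring
    cases b <;> simp <;> omega

theorem e_inj : Function.Injective e := by
  intro x
  induction x using List.reverseRecOn with
  | nil =>
    intro y h
    cases y using List.reverseRecOn with
    | nil => rfl
    | append_singleton m c =>
      exfalso
      rw [e_append] at h
      have := (e_bounds m).1
      have h1 : 1 ≤ e m := le_trans (Nat.one_le_two_pow) this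
      have : e [] = 1 := by simp [e]
      cases c <;> simp at h <;> omega
  | append_singleton l b ih =>
    intro y h
    cases y using List.reverseRecOn with
    | nil =>
      exfalso
      rw [e_append] at h
      have h1 : 1 ≤ e l := le_trans (Nat.one_le_two_pow) (e_bounds l).1
      have : e [] = 1 := by simp [e]
      cases b <;> simp at h <;> omega
    | append_singleton m c =>
      rw [e_append, e_append] at h
      have hb : b = c := by
        cases b <;> cases c <;> simp at h ⊢ <;> omega
      subst hb
      have hm : e l = e m := by cases b <;> simp at h <;> omega
      rw [ih hm]

theorem card_le_of_length_le {α : Type*} [DecidableEq α] {n : ℕ} (S : Finset α)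
    (F : α → List Bool) (hinj : Set.InjOn F S)
    (hlen : ∀ a ∈ S, (F a).length ≤ n) : S.card ≤ 2 ^ (n + 1) := by
  have := Finset.card_le_card_of_injOn (t := Finset.range (2 ^ (n + 1))) (fun a => e (F a))
    (fun a ha => Finset.mem_range.2 <|
      calc e (F a) < 2 ^ ((F a).length + 1) := (e_bounds _).2
        _ ≤ 2 ^ (n + 1) := Nat.pow_le_pow_right (by norm_num)
            (by have := hlen a ha; omega))
    (fun a ha b hb hab => hinj ha hb (e_inj hab))
  simpa using this

theorem W_tendsto (U : Computer) (hU : IsOptimal U) (T : ℝ) (hT : 1 ≤ T)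
    (q : ℕ → List Bool) (hmem : ∀ n, q n ∈ U.domain)
    (hsurj : ∀ p ∈ U.domain, ∃ n, q n = p) :
    Tendsto (fun n : ℕ => ∑ i ∈ Finset.range n,
      ((q i).length : ℝ) * (2 : ℝ) ^ (-((q i).length : ℝ) / T)) atTop atTop := by
  classical
  have hTpos : (0 : ℝ) < T := lt_of_lt_of_le one_pos hT
  set v : List Bool → ℝ := fun p => (p.length : ℝ) * (2 : ℝ) ^ (-(p.length : ℝ) / T) with hv
  have hv0 : ∀ p, 0 ≤ v p := fun p =>
    mul_nonneg (Nat.cast_nonneg _) (Real.rpow_pos_of_pos two_pos _).le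
  obtain ⟨d, hd⟩ := hU C
  have key : ∀ k (s : List Bool), s.length = 2 ^ k →
      ∃ p', p'.length ≤ 2 ^ k + k + 1 + d ∧ s ∈ U.f p' := by
    intro k s hs
    obtain ⟨p', h1, h2⟩ := hd (enc k s) (C_dom_enc hs)
    refine ⟨p', ?_, h2 s (mem_Cf_enc hs)⟩
    rw [enc_length, hs] at h1; omega
  set P : ℕ → List Bool → List Bool := fun k s =>
    if h : s.length = 2 ^ k then (key k s h).choose else [] with hPdef
  have hP1 : ∀ k (s : List Bool), s.length = 2 ^ k → (P k s).length ≤ 2 ^ k + k + 1 + d := by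
    intro k s hs; simp only [hPdef, dif_pos hs]; exact (key k s hs).choose_spec.1
  have hP2 : ∀ k (s : List Bool), s.length = 2 ^ k → s ∈ U.f (P k s) := by
    intro k s hs; simp only [hPdef, dif_pos hs]; exact (key k s hs).choose_spec.2
  have hPdom : ∀ k (s : List Bool), s.length = 2 ^ k → P k s ∈ U.domain := by
    intro k s hs; exact Part.dom_iff_mem.2 ⟨s, hP2 k s hs⟩
  set idx : List Bool → ℕ := fun p => if h : p ∈ U.domain then (hsurj p h).choose else 0
    with hidxdef
  have hidx : ∀ p, p ∈ U.domain → q (idx p) = p := by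
    intro p hp; simp only [hidxdef, dif_pos hp]; exact (hsurj p hp).choose_spec
  -- blocks
  set J : ℕ → Finset ℕ := fun k =>
    ((Finset.univ : Finset (Fin (2 ^ k) → Bool)).filter
        (fun f => 2 ^ k - 1 ≤ (P k (List.ofFn f)).length)).image
      (fun f => idx (P k (List.ofFn f))) with hJdef
  set c : ℝ := (2 : ℝ) ^ (-(3 + (d : ℝ))) with hc
  have hcpos : 0 < c := Real.rpow_pos_of_pos two_pos _
  -- injectivity of s ↦ P k s on length-2^k strings
  have hPinj : ∀ k (s s' : List Bool), s.length = 2 ^ k → s'.length = 2 ^ k →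
      P k s = P k s' → s = s' := by
    intro k s s' hs hs' h
    exact Part.mem_unique (hP2 k s hs) (h ▸ hP2 k s' hs')
  -- the map into indices is injective on functions
  have hmapinj : ∀ k (f f' : Fin (2 ^ k) → Bool),
      idx (P k (List.ofFn f)) = idx (P k (List.ofFn f')) → f = f' := by
    intro k f f' h
    have h1 : P k (List.ofFn f) = P k (List.ofFn f') := by
      have := congrArg q h
      rwa [hidx _ (hPdom k _ ((List.length_ofFn (f := f)))), hidx _ (hPdom k _ ((List.length_ofFn (f := f'))))]
        at this
    exact List.ofFn_injective (hPinj k _ _ ((List.length_ofFn (f := f))) ((List.length_ofFn (f := f'))) h1)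
  -- block sum lower bound
  have hblock : ∀ k, 1 ≤ k → c ≤ ∑ i ∈ J k, v (q i) := by
    intro k hk
    have h2k : 2 ≤ 2 ^ k := by
      calc 2 = 2 ^ 1 := (pow_one 2).symm
      _ ≤ 2 ^ k := Nat.pow_le_pow_right (by norm_num) hk
    set G := (Finset.univ : Finset (Fin (2 ^ k) → Bool)).filter
      (fun f => 2 ^ k - 1 ≤ (P k (List.ofFn f)).length) with hG
    -- card of bad set
    have hbad : ((Finset.univ : Finset (Fin (2 ^ k) → Bool)).filter
        (fun f => ¬ (2 ^ k - 1 ≤ (P k (List.ofFn f)).length))).card ≤ 2 ^ (2 ^ k - 1) := by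
      have := card_le_of_length_le (n := 2 ^ k - 2)
        ((Finset.univ : Finset (Fin (2 ^ k) → Bool)).filter
          (fun f => ¬ (2 ^ k - 1 ≤ (P k (List.ofFn f)).length)))
        (fun f => P k (List.ofFn f))
        (fun f hf f' hf' h =>
          List.ofFn_injective (hPinj k _ _ ((List.length_ofFn (f := f))) ((List.length_ofFn (f := f'))) h) ▸ rfl)
        (fun f hf => by
          simp only [Finset.mem_filter, not_le] at hf
          show (P k (List.ofFn f)).length ≤ 2 ^ k - 2
          omega)
      have he : 2 ^ k - 2 + 1 = 2 ^ k - 1 := by omega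
      rwa [he] at this
    have hcardU : (Finset.univ : Finset (Fin (2 ^ k) → Bool)).card = 2 ^ (2 ^ k) := by
      rw [Finset.card_univ, Fintype.card_fun]
      simp
    have hGcard : 2 ^ (2 ^ k - 1) ≤ G.card := by
      have hsplit := Finset.card_filter_add_card_filter_not
        (s := (Finset.univ : Finset (Fin (2 ^ k) → Bool)))
        (fun f => 2 ^ k - 1 ≤ (P k (List.ofFn f)).length)
      rw [hcardU, ← hG] at hsplit
      have hpow : 2 ^ (2 ^ k) = 2 * 2 ^ (2 ^ k - 1) := by
        rw [← pow_succ']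
        congr 1
        omega
      omega
    -- pointwise lower bound on good terms
    set L : ℕ := 2 ^ k + k + 1 + d with hL
    set lb : ℝ := ((2 ^ k - 1 : ℕ) : ℝ) * (2 : ℝ) ^ (-(L : ℝ)) with hlb
    have hgood : ∀ f ∈ G, lb ≤ v (P k (List.ofFn f)) := by
      intro f hf
      simp only [hG, Finset.mem_filter] at hf
      have hlen1 : ((2 ^ k - 1 : ℕ) : ℝ) ≤ ((P k (List.ofFn f)).length : ℝ) :=
        Nat.cast_le.2 hf.2
      have hlen2 : ((P k (List.ofFn f)).length : ℝ) ≤ (L : ℝ) :=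
        Nat.cast_le.2 (hP1 k _ ((List.length_ofFn (f := f))))
    -- 2 ^ (-(L)) ≤ 2 ^ (-(len)/T)
      have hexp : (2 : ℝ) ^ (-(L : ℝ)) ≤
          (2 : ℝ) ^ (-((P k (List.ofFn f)).length : ℝ) / T) := by
        apply Real.rpow_le_rpow_of_exponent_le one_le_two
        rw [neg_div]
        apply neg_le_neg
        calc ((P k (List.ofFn f)).length : ℝ) / T
            ≤ ((P k (List.ofFn f)).length : ℝ) := div_le_self (Nat.cast_nonneg _) hT
          _ ≤ (L : ℝ) := hlen2
      exact mul_le_mul hlen1 hexp (Real.rpow_pos_of_pos two_pos _).le (Nat.cast_nonneg _)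
    -- sum over the image
    have hsum_img : ∑ i ∈ J k, v (q i) = ∑ f ∈ G, v (q (idx (P k (List.ofFn f)))) := by
      rw [hJdef]
      exact Finset.sum_image (fun f hf f' hf' h => hmapinj k f f' h)
    have hsum_G : ∑ f ∈ G, v (q (idx (P k (List.ofFn f)))) = ∑ f ∈ G, v (P k (List.ofFn f)) := by
      apply Finset.sum_congr rfl
      intro f hf
      rw [hidx _ (hPdom k _ ((List.length_ofFn (f := f))))]
    have hsum_lb : (G.card : ℝ) * lb ≤ ∑ f ∈ G, v (P k (List.ofFn f)) := by
      have := Finset.card_nsmul_le_sum G (fun f => v (P k (List.ofFn f))) lb hgood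
      rwa [nsmul_eq_mul] at this
    -- now the numeric estimate: (G.card) * lb ≥ c
    have hnum : c ≤ (G.card : ℝ) * lb := by
      have h1 : ((2 ^ (2 ^ k - 1) : ℕ) : ℝ) ≤ (G.card : ℝ) := Nat.cast_le.2 hGcard
      have h2 : (2 : ℝ) ^ ((k - 1 : ℕ) : ℝ) ≤ ((2 ^ k - 1 : ℕ) : ℝ) := by
        rw [Real.rpow_natCast]
        have : (2 : ℕ) ^ (k - 1) ≤ 2 ^ k - 1 := by
          have : 2 ^ k = 2 * 2 ^ (k - 1) := by
            rw [← pow_succ']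
            congr 1
            omega
          have h3 : 1 ≤ 2 ^ (k-1) := Nat.one_le_two_pow
          omega
        calc (2:ℝ) ^ (k-1) = ((2 ^ (k-1) : ℕ) : ℝ) := by push_cast; ring
          _ ≤ _ := Nat.cast_le.2 this
      have hlbpos : 0 ≤ (2:ℝ) ^ (-(L:ℝ)) := (Real.rpow_pos_of_pos two_pos _).le
      calc c ≤ (2:ℝ) ^ (((2 ^ k - 1 : ℕ) : ℝ) + ((k - 1 : ℕ):ℝ) + (-(L:ℝ))) := by
            apply Real.rpow_le_rpow_of_exponent_le one_le_two
            have e1 : ((2 ^ k - 1 : ℕ) : ℝ) = ((2:ℝ) ^ k) - 1 := by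
              push_cast [Nat.cast_sub (by omega : 1 ≤ 2 ^ k)]; ring
            have e2 : ((k - 1 : ℕ) : ℝ) = (k : ℝ) - 1 := by
              push_cast [Nat.cast_sub hk]; ring
            have e3 : (L : ℝ) = (2:ℝ) ^ k + k + 1 + d := by
              rw [hL]; push_cast; ring
            rw [e1, e2, e3]; ring_nf; rfl
        _ = (2:ℝ) ^ (((2 ^ k - 1 : ℕ) : ℝ)) * ((2:ℝ) ^ (((k - 1 : ℕ):ℝ)) * (2:ℝ) ^ (-(L:ℝ))) := by
            rw [← Real.rpow_add two_pos, ← Real.rpow_add two_pos]; ring_nf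
        _ ≤ (G.card : ℝ) * (((2 ^ k - 1 : ℕ) : ℝ) * (2:ℝ) ^ (-(L:ℝ))) := by
            apply mul_le_mul
            · rw [Real.rpow_natCast]
              calc (2:ℝ) ^ (2 ^ k - 1) = ((2 ^ (2 ^ k - 1) : ℕ) : ℝ) := by push_cast; ring
                _ ≤ _ := h1
            · exact mul_le_mul_of_nonneg_right h2 hlbpos
            · exact mul_nonneg (Real.rpow_pos_of_pos two_pos _).le hlbpos
            · exact Nat.cast_nonneg _
        _ = (G.card : ℝ) * lb := by rw [hlb]
    calc c ≤ (G.card : ℝ) * lb := hnum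
      _ ≤ ∑ f ∈ G, v (P k (List.ofFn f)) := hsum_lb
      _ = ∑ i ∈ J k, v (q i) := by rw [hsum_img, hsum_G]
  -- disjointness of the blocks
  have hdisj : ∀ k k', k ≠ k' → Disjoint (J k) (J k') := by
    intro k k' hne
    rw [Finset.disjoint_left]
    intro i hik hik'
    simp only [hJdef, Finset.mem_image, Finset.mem_filter] at hik hik'
    obtain ⟨f, hf, hfi⟩ := hik
    obtain ⟨f', hf', hfi'⟩ := hik'
    have e1 : q i = P k (List.ofFn f) := by rw [← hfi, hidx _ (hPdom k _ ((List.length_ofFn (f := f))))]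
    have e2 : q i = P k' (List.ofFn f') := by
      rw [← hfi', hidx _ (hPdom k' _ ((List.length_ofFn (f := f'))))]
    have m1 : List.ofFn f ∈ U.f (q i) := e1 ▸ hP2 k _ ((List.length_ofFn (f := f)))
    have m2 : List.ofFn f' ∈ U.f (q i) := e2 ▸ hP2 k' _ ((List.length_ofFn (f := f')))
    have : List.ofFn f = List.ofFn f' := Part.mem_unique m1 m2
    have hlen : (2:ℕ) ^ k = 2 ^ k' := by
      rw [← (List.length_ofFn (f := f)), ← (List.length_ofFn (f := f')), this]
    exact hne (Nat.pow_right_injective (le_refl 2) hlen)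
  -- unboundedness
  have hmono : Monotone (fun n : ℕ => ∑ i ∈ Finset.range n, v (q i)) := by
    intro a b hab
    exact Finset.sum_le_sum_of_subset_of_nonneg
      (Finset.range_subset_range.2 hab) (fun i _ _ => hv0 _)
  apply tendsto_atTop_atTop_of_monotone hmono
  intro b
  obtain ⟨K, hK⟩ := exists_nat_ge (b / c)
  have hbK : b ≤ K * c := by
    rw [div_le_iff₀ hcpos] at hK
    exact hK
  set S := (Finset.Icc 1 K).biUnion J with hS
  have hsum_S : (K : ℝ) * c ≤ ∑ i ∈ S, v (q i) := by
    rw [hS, Finset.sum_biUnion (fun x hx y hy hxy => hdisj x y hxy)]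
    calc (K : ℝ) * c = ∑ _k ∈ Finset.Icc 1 K, c := by
          rw [Finset.sum_const, Nat.card_Icc]
          simp [nsmul_eq_mul]
      _ ≤ ∑ k ∈ Finset.Icc 1 K, ∑ i ∈ J k, v (q i) := by
          apply Finset.sum_le_sum
          intro k hk
          exact hblock k (Finset.mem_Icc.1 hk).1
  refine ⟨S.sup id + 1, ?_⟩
  have hsub : S ⊆ Finset.range (S.sup id + 1) := by
    intro i hi
    rw [Finset.mem_range]
    exact Nat.lt_succ_of_le (Finset.le_sup (f := id) hi)
  calc b ≤ (K : ℝ) * c := hbK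
    _ ≤ ∑ i ∈ S, v (q i) := hsum_S
    _ ≤ ∑ i ∈ Finset.range (S.sup id + 1), v (q i) :=
        Finset.sum_le_sum_of_subset_of_nonneg hsub (fun i _ _ => hv0 _)
end FSE

/-- **Theorem (paper Thm 12(ii)).** For real `T ≥ 1` and any enumeration
`q₁, q₂, …` of `dom U`, the finite-stage entropies
`S_n(T) = (1/T)·(W_n(T)/Z_n(T)) + log₂ Z_n(T)` diverge to infinity. -/
theorem finite_stage_entropy_tendsto_atTop (U : Computer) (hU : IsOptimal U)
    (T : ℝ) (hT : 1 ≤ T)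
    (q : ℕ → List Bool) (hmem : ∀ n, q n ∈ U.domain)
    (hinj : Function.Injective q) (hsurj : ∀ p ∈ U.domain, ∃ n, q n = p) :
    Tendsto (fun n : ℕ =>
      (1 / T) * ((∑ i ∈ Finset.range n,
          ((q i).length : ℝ) * (2 : ℝ) ^ (-((q i).length : ℝ) / T)) /
        (∑ i ∈ Finset.range n, (2 : ℝ) ^ (-((q i).length : ℝ) / T))) +
      Real.logb 2 (∑ i ∈ Finset.range n, (2 : ℝ) ^ (-((q i).length : ℝ) / T)))
      atTop atTop := by
  have hTpos : (0 : ℝ) < T := lt_of_lt_of_le one_pos hT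
  set Zn : ℕ → ℝ := fun n => ∑ i ∈ Finset.range n, (2 : ℝ) ^ (-((q i).length : ℝ) / T)
    with hZn
  set Wn : ℕ → ℝ := fun n => ∑ i ∈ Finset.range n,
      ((q i).length : ℝ) * (2 : ℝ) ^ (-((q i).length : ℝ) / T) with hWn
  have hapos : ∀ i : ℕ, (0:ℝ) < (2 : ℝ) ^ (-((q i).length : ℝ) / T) :=
    fun i => Real.rpow_pos_of_pos two_pos _
  have hZpos : ∀ n, 1 ≤ n → 0 < Zn n := by
    intro n hn
    apply Finset.sum_pos (fun i _ => hapos i)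
    exact Finset.nonempty_range_iff.2 (by omega)
  have hZmono : Monotone Zn := by
    intro m n hmn
    exact Finset.sum_le_sum_of_subset_of_nonneg (Finset.range_subset_range.2 hmn)
      (fun i _ _ => (hapos i).le)
  have hWnonneg : ∀ n, 0 ≤ Wn n := by
    intro n
    apply Finset.sum_nonneg
    intro i _
    exact mul_nonneg (Nat.cast_nonneg _) (hapos i).le
  have hW : Tendsto Wn atTop atTop := FSE.W_tendsto U hU T hT q hmem hsurj
  by_cases hbdd : ∃ B : ℝ, ∀ n, Zn n ≤ B
  · -- bounded partition function : W / Z dominates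
    obtain ⟨B, hB⟩ := hbdd
    have hBpos : 0 < B := lt_of_lt_of_le (hZpos 1 le_rfl) (hB 1)
    have hmain : Tendsto (fun n => (1 / (T * B)) * Wn n + Real.logb 2 (Zn 1)) atTop atTop := by
      apply tendsto_atTop_add_const_right
      exact hW.const_mul_atTop (by positivity)
    apply tendsto_atTop_mono' atTop _ hmain
    filter_upwards [eventually_ge_atTop 1] with n hn
    have hZn1 : 0 < Zn n := hZpos n hn
    have h1 : (1 / (T * B)) * Wn n ≤ (1 / T) * (Wn n / Zn n) := by
      have hstep : Wn n / B ≤ Wn n / Zn n :=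
        div_le_div_of_nonneg_left (hWnonneg n) hZn1 (hB n)
      have hB0 : B ≠ 0 := ne_of_gt hBpos
      have hT0 : T ≠ 0 := ne_of_gt hTpos
      calc (1 / (T * B)) * Wn n = (1 / T) * (Wn n / B) := by field_simp
        _ ≤ (1 / T) * (Wn n / Zn n) :=
            mul_le_mul_of_nonneg_left hstep (by positivity)
    have h2 : Real.logb 2 (Zn 1) ≤ Real.logb 2 (Zn n) :=
      Real.logb_le_logb_of_le one_lt_two (hZpos 1 le_rfl) (hZmono hn)
    exact add_le_add h1 h2
  · -- unbounded partition function : log Z dominates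
    push_neg at hbdd
    have hZtop : Tendsto Zn atTop atTop :=
      tendsto_atTop_atTop_of_monotone hZmono (fun b => (hbdd b).imp (fun n h => h.le))
    have hlog : Tendsto (fun n => Real.logb 2 (Zn n)) atTop atTop :=
      (Real.tendsto_logb_atTop one_lt_two).comp hZtop
    apply tendsto_atTop_mono' atTop _ hlog
    filter_upwards [eventually_ge_atTop 1] with n hn
    have : 0 ≤ (1 / T) * (Wn n / Zn n) := by
      apply mul_nonneg (by positivity)
      exact div_nonneg (hWnonneg n) (hZpos n hn).le
    linarith
end

section
/- Let q₁, q₂, q₃, … be any enumeration (a bijection from ℕ⁺) of the countably infinite set dom U. Writing Z_n = ∑_{i=1}^n 2^{−|q_i|}, W_n = ∑_{i=1}^n |q_i|·2^{−|q_i|}, and Y_n = ∑_{i=1}^n |q_i|²·2^{−|q_i|}, the finite-stage specific heats at temperature 1, namely C_n(1) = ln 2 · ( Y_n/Z_n − (W_n/Z_n)² ), diverge to ∞ as n → ∞. -/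
open Filter

namespace SpecificHeatAux

private lemma kraft_aux : ∀ (N : ℕ) (S : Finset (List Bool)), (∀ p ∈ S, p.length ≤ N) →
    PrefixFree ↑S → ∑ p ∈ S, ((2:ℝ)⁻¹) ^ p.length ≤ 1 := by
  intro N
  induction N with
  | zero =>
    intro S hlen _
    have hsub : S ⊆ {([] : List Bool)} := by
      intro p hp
      simp only [Finset.mem_singleton]
      exact List.length_eq_zero_iff.1 (Nat.le_zero.1 (hlen p hp))
    calc ∑ p ∈ S, ((2:ℝ)⁻¹) ^ p.length
        ≤ ∑ p ∈ {([] : List Bool)}, ((2:ℝ)⁻¹) ^ p.length :=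
          Finset.sum_le_sum_of_subset_of_nonneg hsub (by intros; positivity)
      _ = 1 := by simp
  | succ N ih =>
    intro S hlen hpf
    by_cases hnil : ([] : List Bool) ∈ S
    · have hsub : S ⊆ {([] : List Bool)} := by
        intro p hp
        simp only [Finset.mem_singleton]
        exact (hpf [] (by simpa) p (by simpa) (List.nil_prefix)).symm
      calc ∑ p ∈ S, ((2:ℝ)⁻¹) ^ p.length
          ≤ ∑ p ∈ {([] : List Bool)}, ((2:ℝ)⁻¹) ^ p.length :=
            Finset.sum_le_sum_of_subset_of_nonneg hsub (by intros; positivity)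
        _ = 1 := by simp
    · have hne : ∀ p ∈ S, p ≠ [] := fun p hp h => hnil (h ▸ hp)
      have hcons : ∀ p ∈ S, p = p.headI :: p.tail := by
        intro p hp
        cases p with
        | nil => exact absurd rfl (hne _ hp)
        | cons a t => rfl
      -- split by head
      have key : ∀ b : Bool,
          ∑ p ∈ S.filter (fun p => p.headI = b), ((2:ℝ)⁻¹) ^ p.length
            ≤ (2:ℝ)⁻¹ := by
        intro b
        set Sb := S.filter (fun p => p.headI = b) with hSb
        have hmem : ∀ p ∈ Sb, p = b :: p.tail := by
          intro p hp
          rw [hSb, Finset.mem_filter] at hp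
          conv_lhs => rw [hcons p hp.1]
          rw [hp.2]
        have hinj : Set.InjOn List.tail (Sb : Set (List Bool)) := by
          intro p hp p' hp' h
          rw [hmem p hp, hmem p' hp', h]
        have hsum : ∑ p ∈ Sb, ((2:ℝ)⁻¹) ^ p.length
            = ∑ t ∈ Sb.image List.tail, ((2:ℝ)⁻¹) ^ (t.length + 1) := by
          rw [Finset.sum_image (fun p hp p' hp' h => hinj hp hp' h)]
          refine Finset.sum_congr rfl fun p hp => ?_
          congr 1
          conv_lhs => rw [hmem p hp]
          simp
        have hT : ∑ t ∈ Sb.image List.tail, ((2:ℝ)⁻¹) ^ t.length ≤ 1 := by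
          apply ih
          · intro t ht
            obtain ⟨p, hp, rfl⟩ := Finset.mem_image.1 ht
            have := hlen p (Finset.mem_filter.1 (hSb ▸ hp)).1
            have hlp : p.length = p.tail.length + 1 := by
              conv_lhs => rw [hmem p hp]
              simp
            omega
          · intro t ht t' ht' hpre
            obtain ⟨p, hp, rfl⟩ := Finset.mem_image.1 ht
            obtain ⟨p', hp', rfl⟩ := Finset.mem_image.1 ht'
            have hpp : p <+: p' := by
              rw [hmem p hp, hmem p' hp', List.cons_prefix_cons]
              exact ⟨rfl, hpre⟩
            have hSp : p ∈ S := (Finset.mem_filter.1 (hSb ▸ hp)).1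
            have hSp' : p' ∈ S := (Finset.mem_filter.1 (hSb ▸ hp')).1
            rw [hpf p (by simpa) p' (by simpa) hpp]
        calc ∑ p ∈ Sb, ((2:ℝ)⁻¹) ^ p.length
            = (2:ℝ)⁻¹ * ∑ t ∈ Sb.image List.tail, ((2:ℝ)⁻¹) ^ t.length := by
              rw [hsum, Finset.mul_sum]
              exact Finset.sum_congr rfl fun t _ => by ring
          _ ≤ (2:ℝ)⁻¹ * 1 := by
              apply mul_le_mul_of_nonneg_left hT (by norm_num)
          _ = (2:ℝ)⁻¹ := by ring
      have hsplit : ∑ p ∈ S, ((2:ℝ)⁻¹) ^ p.length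
          = ∑ p ∈ S.filter (fun p => p.headI = false), ((2:ℝ)⁻¹) ^ p.length
            + ∑ p ∈ S.filter (fun p => p.headI = true), ((2:ℝ)⁻¹) ^ p.length := by
        rw [← Finset.sum_filter_add_sum_filter_not S (fun p => p.headI = false)]
        congr 1
        apply Finset.sum_congr _ fun _ _ => rfl
        apply Finset.filter_congr
        intro p _
        simp
      rw [hsplit]
      have := key false
      have := key true
      linarith

/-- Kraft inequality for finite prefix-free sets of binary strings. -/
lemma kraft (S : Finset (List Bool)) (hpf : PrefixFree ↑S) :
    ∑ p ∈ S, ((2:ℝ)⁻¹) ^ p.length ≤ 1 :=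
  kraft_aux (S.sup List.length) S (fun p hp => Finset.le_sup hp) hpf

/-- Cardinality bound from Kraft. -/
lemma card_le_of_prefixFree (S : Finset (List Bool)) (hpf : PrefixFree ↑S) (L : ℕ)
    (hlen : ∀ p ∈ S, p.length ≤ L) : (S.card : ℝ) ≤ 2 ^ L := by
  have h1 : (S.card : ℝ) * ((2:ℝ)⁻¹) ^ L ≤ ∑ p ∈ S, ((2:ℝ)⁻¹) ^ p.length := by
    calc (S.card : ℝ) * ((2:ℝ)⁻¹) ^ L = ∑ _p ∈ S, ((2:ℝ)⁻¹) ^ L := by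
          rw [Finset.sum_const, nsmul_eq_mul]
      _ ≤ ∑ p ∈ S, ((2:ℝ)⁻¹) ^ p.length := by
          refine Finset.sum_le_sum fun p hp => ?_
          exact pow_le_pow_of_le_one (by norm_num) (by norm_num) (hlen p hp)
  have h2 := kraft S hpf
  have h3 : (S.card : ℝ) * ((2:ℝ)⁻¹) ^ L ≤ 1 := h1.trans h2
  have hpos : (0:ℝ) < ((2:ℝ)⁻¹) ^ L := by positivity
  rw [← le_div_iff₀ hpos] at h3
  calc (S.card:ℝ) ≤ 1 / ((2:ℝ)⁻¹)^L := h3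
    _ = 2 ^ L := by rw [one_div, ← inv_pow, inv_inv]


/-- decode: input `1^k 0 s` with `|s| = 2^k` ↦ `s`. -/
def F (p : List Bool) : Option (List Bool) :=
  if p.length = p.idxOf false + 1 + 2 ^ p.idxOf false
  then some (List.tail^[p.idxOf false + 1] p) else none

lemma primrec_F : Primrec F := by
  have hidx : Primrec fun p : List Bool => p.idxOf false :=
    Primrec.list_idxOf.comp (Primrec.const false) Primrec.id
  have hpow : Primrec₂ ((· ^ ·) : ℕ → ℕ → ℕ) := Primrec₂.unpaired'.1 Nat.Primrec.pow
  have hcond : PrimrecPred fun p : List Bool =>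
      p.length = p.idxOf false + 1 + 2 ^ p.idxOf false :=
    Primrec.eq.comp Primrec.list_length
      (Primrec.nat_add.comp (Primrec.nat_add.comp hidx (Primrec.const 1))
        (hpow.comp (Primrec.const 2) hidx))
  have hout : Primrec fun p : List Bool => List.tail^[p.idxOf false + 1] p :=
    Primrec.nat_iterate (Primrec.succ.comp hidx) Primrec.id
      ((Primrec.list_tail.comp Primrec.snd).to₂)
  exact Primrec.ite hcond (Primrec.option_some.comp hout) (Primrec.const none)

lemma indexOf_code (k : ℕ) (s : List Bool) :
    (List.replicate k true ++ false :: s).idxOf false = k := by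
  induction k with
  | zero => simp [List.idxOf_cons]
  | succ k ih => simp [List.replicate_succ, List.idxOf_cons, ih]

lemma tail_iter_code (k : ℕ) (s : List Bool) :
    List.tail^[k + 1] (List.replicate k true ++ false :: s) = s := by
  induction k with
  | zero => simp
  | succ k ih =>
    rw [List.replicate_succ, List.cons_append, Function.iterate_succ_apply]
    exact ih

lemma length_code (k : ℕ) (s : List Bool) :
    (List.replicate k true ++ false :: s).length = k + 1 + s.length := by
  simp; omega

lemma F_code (k : ℕ) (s : List Bool) (hs : s.length = 2 ^ k) :
    F (List.replicate k true ++ false :: s) = some s := by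
  rw [F, indexOf_code, if_pos, tail_iter_code]
  rw [length_code, hs]

lemma split_at_indexOf : ∀ p : List Bool, p.idxOf false < p.length →
    p = List.replicate (p.idxOf false) true ++
      false :: List.tail^[p.idxOf false + 1] p := by
  intro p
  induction p with
  | nil => simp
  | cons b t ih =>
    intro h
    cases b with
    | false => simp [List.idxOf_cons]
    | true =>
      have hidx : (true :: t).idxOf false = t.idxOf false + 1 := by
        simp [List.idxOf_cons]
      rw [hidx] at h ⊢
      have ht : t.idxOf false < t.length := by simpa using h
      rw [List.replicate_succ, List.cons_append, Function.iterate_succ_apply]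
      simpa using ih ht

lemma uniq_decomp : ∀ (a : ℕ) (b : ℕ) (u v : List Bool),
    List.replicate a true ++ false :: u = List.replicate b true ++ false :: v →
    a = b ∧ u = v := by
  intro a
  induction a with
  | zero =>
    intro b u v h
    cases b with
    | zero => simpa using h
    | succ b => simp [List.replicate_succ] at h
  | succ a ih =>
    intro b u v h
    cases b with
    | zero => simp [List.replicate_succ] at h
    | succ b =>
      simp only [List.replicate_succ, List.cons_append, List.cons.injEq, true_and] at h
      obtain ⟨h1, h2⟩ := ih b u v h
      exact ⟨by omega, h2⟩

lemma F_dom_structure {p : List Bool} (h : (F p).isSome) :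
    ∃ k s, p = List.replicate k true ++ false :: s ∧ s.length = 2 ^ k := by
  rw [F] at h
  split_ifs at h with hc
  swap
  · simp at h
  have hp2 : 1 ≤ 2 ^ p.idxOf false := Nat.one_le_two_pow
  refine ⟨p.idxOf false, List.tail^[p.idxOf false + 1] p, split_at_indexOf p ?_, ?_⟩
  · omega
  · have := split_at_indexOf p (by omega)
    have hl : p.length = p.idxOf false + 1 + (List.tail^[p.idxOf false + 1] p).length := by
      conv_lhs => rw [this]
      rw [length_code]
    omega

/-- The auxiliary computer. -/
def C : Computer where
  f := fun p => (F p : Part (List Bool))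
  partrec := Computable.ofOption primrec_F.to_comp
  prefixFree := by
    intro p hp q hq hpq
    simp only [Set.mem_setOf_eq, Part.ofOption_dom] at hp hq
    obtain ⟨kp, sp, rfl, hsp⟩ := F_dom_structure hp
    obtain ⟨kq, sq, hq2, hsq⟩ := F_dom_structure hq
    obtain ⟨t, rfl⟩ := hpq
    rw [List.append_assoc, List.cons_append] at hq2
    obtain ⟨hk, hs⟩ := uniq_decomp _ _ _ _ hq2
    have : (sp ++ t).length = sq.length := by rw [hs]
    rw [List.length_append, hsq, ← hk, hsp] at this
    have ht : t = [] := List.length_eq_zero_iff.1 (by omega)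
    rw [ht, List.append_nil]

lemma C_dom (k : ℕ) (s : List Bool) (hs : s.length = 2 ^ k) :
    (C.f (List.replicate k true ++ false :: s)).Dom := by
  show (Part.ofOption _).Dom
  rw [Part.ofOption_dom, F_code k s hs]
  simp

lemma C_val (k : ℕ) (s : List Bool) (hs : s.length = 2 ^ k) :
    s ∈ C.f (List.replicate k true ++ false :: s) := by
  show s ∈ Part.ofOption _
  rw [Part.mem_ofOption, F_code k s hs]
  simp


lemma prefixFree_mono {S T : Set (List Bool)} (h : PrefixFree S) (hTS : T ⊆ S) :
    PrefixFree T := fun p hp q hq hpq => h p (hTS hp) q (hTS hq) hpq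

lemma exists_level_sets (U : Computer) (hU : IsOptimal U) :
    ∃ ε : ℝ, 0 < ε ∧ ∃ T : ℕ → Finset (List Bool),
      (∀ k, (T k : Set (List Bool)) ⊆ U.domain) ∧
      (∀ j k, j ≠ k → Disjoint (T j) (T k)) ∧
      (∀ k, 1 ≤ k → ε ≤ ∑ p ∈ T k, (p.length : ℝ) * ((2:ℝ)⁻¹) ^ p.length) := by
  classical
  obtain ⟨d, hd⟩ := hU C
  have hprog : ∀ (k : ℕ) (s : List Bool), s.length = 2 ^ k →
      ∃ p' : List Bool, p'.length ≤ 2 ^ k + k + 1 + d ∧ s ∈ U.f p' := by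
    intro k s hs
    obtain ⟨p', hlen, hval⟩ := hd (List.replicate k true ++ false :: s) (C_dom k s hs)
    refine ⟨p', ?_, hval s (C_val k s hs)⟩
    have : (List.replicate k true ++ false :: s).length = k + 1 + 2 ^ k := by
      simp [hs]; omega
    omega
  -- choice of programs
  let g : ∀ k : ℕ, (Fin (2 ^ k) → Bool) → List Bool := fun k v =>
    (hprog k (List.ofFn v) (by simp)).choose
  have hg_len : ∀ k v, (g k v).length ≤ 2 ^ k + k + 1 + d := fun k v =>
    (hprog k (List.ofFn v) (by simp)).choose_spec.1
  have hg_val : ∀ k v, List.ofFn v ∈ U.f (g k v) := fun k v =>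
    (hprog k (List.ofFn v) (by simp)).choose_spec.2
  have hg_inj : ∀ k, Function.Injective (g k) := by
    intro k v v' h
    have h1 := hg_val k v
    have h2 := hg_val k v'
    rw [h] at h1
    exact List.ofFn_injective (Part.mem_unique h1 h2)
  refine ⟨((2:ℝ)⁻¹) ^ (d + 3), by positivity,
    fun k => Finset.image (g k) Finset.univ, ?_, ?_, ?_⟩
  · intro k p hp
    obtain ⟨v, _, rfl⟩ := Finset.mem_image.1 hp
    exact Part.dom_iff_mem.2 ⟨_, hg_val k v⟩
  · intro j k hjk
    rw [Finset.disjoint_left]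
    intro p hpj hpk
    obtain ⟨v, _, rfl⟩ := Finset.mem_image.1 hpj
    obtain ⟨w, _, hw⟩ := Finset.mem_image.1 hpk
    have h1 := hg_val j v
    have h2 := hg_val k w
    rw [hw] at h2
    have := Part.mem_unique h1 h2
    have hlen : (2:ℕ) ^ j = 2 ^ k := by
      have := congrArg List.length this
      simpa using this
    exact hjk (Nat.pow_right_injective (le_refl 2) hlen)
  · intro k hk
    set T := Finset.image (g k) (Finset.univ : Finset (Fin (2^k) → Bool)) with hT
    have hTdom : (T : Set (List Bool)) ⊆ U.domain := by
      intro p hp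
      obtain ⟨v, _, rfl⟩ := Finset.mem_image.1 hp
      exact Part.dom_iff_mem.2 ⟨_, hg_val k v⟩
    set m := 2 ^ k with hm
    have hm2 : 2 ≤ m := by
      calc 2 = 2 ^ 1 := rfl
        _ ≤ 2 ^ k := Nat.pow_le_pow_right (by norm_num) hk
    have hcardT : T.card = 2 ^ m := by
      rw [hT, Finset.card_image_of_injective _ (hg_inj k), Finset.card_univ]
      simp [hm]
    set M := m + k + 1 + d with hM
    set A := T.filter (fun p => p.length ≤ m - 2) with hA
    set B := T.filter (fun p => ¬ p.length ≤ m - 2) with hB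
    have hcardA : (A.card : ℝ) ≤ 2 ^ (m - 2) := by
      apply card_le_of_prefixFree
      · exact prefixFree_mono U.prefixFree
          (fun p hp => hTdom (Finset.mem_of_mem_filter _ (by exact hp)))
      · intro p hp
        exact (Finset.mem_filter.1 hp).2
    have hcardB : (2:ℝ) ^ (m - 1) ≤ (B.card : ℝ) := by
      have hsplit : A.card + B.card = T.card := Finset.card_filter_add_card_filter_not _
      have h4 : (T.card : ℝ) = 4 * 2 ^ (m - 2) := by
        rw [hcardT]
        have : m = (m - 2) + 2 := by omega
        rw [this]
        push_cast [pow_add]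
        ring
      have h2 : (2:ℝ) ^ (m - 1) = 2 * 2 ^ (m - 2) := by
        have : m - 1 = (m - 2) + 1 := by omega
        rw [this, pow_succ]
        ring
      have hBr : (B.card : ℝ) = (T.card : ℝ) - A.card := by
        push_cast [← hsplit]
        ring
      rw [hBr, h4, h2]
      linarith
    have hBsum : ∀ p ∈ B, ((m:ℝ) - 1) * ((2:ℝ)⁻¹) ^ M ≤ (p.length : ℝ) * ((2:ℝ)⁻¹) ^ p.length := by
      intro p hp
      rw [hB, Finset.mem_filter] at hp
      have hlow : m - 1 ≤ p.length := by omega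
      have hhigh : p.length ≤ M := by
        obtain ⟨v, _, rfl⟩ := Finset.mem_image.1 hp.1
        have := hg_len k v
        omega
      apply mul_le_mul
      · rw [show ((m:ℝ) - 1) = ((m - 1 : ℕ) : ℝ) from by
          rw [Nat.cast_sub (by omega : 1 ≤ m)]; norm_num]
        exact_mod_cast hlow
      · exact pow_le_pow_of_le_one (by norm_num) (by norm_num) hhigh
      · positivity
      · positivity
    have hstep : (B.card : ℝ) * (((m:ℝ) - 1) * ((2:ℝ)⁻¹) ^ M)
        ≤ ∑ p ∈ B, (p.length : ℝ) * ((2:ℝ)⁻¹) ^ p.length := by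
      calc (B.card : ℝ) * (((m:ℝ) - 1) * ((2:ℝ)⁻¹) ^ M)
          = ∑ _p ∈ B, ((m:ℝ) - 1) * ((2:ℝ)⁻¹) ^ M := by
            rw [Finset.sum_const, nsmul_eq_mul]
        _ ≤ _ := Finset.sum_le_sum hBsum
    have hsub : ∑ p ∈ B, (p.length : ℝ) * ((2:ℝ)⁻¹) ^ p.length
        ≤ ∑ p ∈ T, (p.length : ℝ) * ((2:ℝ)⁻¹) ^ p.length :=
      Finset.sum_le_sum_of_subset_of_nonneg (Finset.filter_subset _ _)
        (by intros; positivity)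
    -- final numeric bound
    have hfinal : ((2:ℝ)⁻¹) ^ (d + 3) ≤ (2:ℝ) ^ (m - 1) * (((m:ℝ) - 1) * ((2:ℝ)⁻¹) ^ M) := by
      have hMsplit : M = (m - 1) + (k + 2 + d) := by omega
      have hcancel : (2:ℝ) ^ (m-1) * ((2:ℝ)⁻¹) ^ (m-1) = 1 := by
        rw [← mul_pow]
        norm_num
      have hksplit : k + 2 + d = (k - 1) + (d + 3) := by omega
      have hml : (2:ℝ) ^ (k - 1) ≤ (m:ℝ) - 1 := by
        have h1 : (2:ℕ) ^ (k-1) + 1 ≤ m := by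
          have : (2:ℕ) ^ (k-1) < 2 ^ k := Nat.pow_lt_pow_right (by norm_num) (by omega)
          omega
        have := (Nat.cast_le (α := ℝ)).2 h1
        push_cast at this
        linarith
      calc ((2:ℝ)⁻¹) ^ (d + 3)
          = ((2:ℝ) ^ (k-1) * ((2:ℝ)⁻¹) ^ (k-1)) * ((2:ℝ)⁻¹) ^ (d + 3) := by
            rw [← mul_pow]; norm_num
        _ ≤ ((m:ℝ) - 1) * (((2:ℝ)⁻¹) ^ (k-1) * ((2:ℝ)⁻¹) ^ (d + 3)) := by
            rw [mul_assoc]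
            apply mul_le_mul_of_nonneg_right hml (by positivity)
        _ = ((m:ℝ) - 1) * ((2:ℝ)⁻¹) ^ (k + 2 + d) := by
            rw [← pow_add, ← hksplit]
        _ = (2:ℝ) ^ (m - 1) * (((m:ℝ) - 1) * ((2:ℝ)⁻¹) ^ M) := by
            have hsplit2 : ((2:ℝ)⁻¹) ^ M = ((2:ℝ)⁻¹) ^ (m-1) * ((2:ℝ)⁻¹) ^ (k+2+d) := by
              rw [hMsplit, pow_add]
            rw [hsplit2, show (2:ℝ) ^ (m-1) * (((m:ℝ)-1) * (((2:ℝ)⁻¹)^(m-1) * ((2:ℝ)⁻¹)^(k+2+d)))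
              = ((2:ℝ)^(m-1) * ((2:ℝ)⁻¹)^(m-1)) * (((m:ℝ)-1) * ((2:ℝ)⁻¹)^(k+2+d)) from by ring,
              hcancel, one_mul]
    calc ((2:ℝ)⁻¹) ^ (d + 3)
        ≤ (2:ℝ) ^ (m - 1) * (((m:ℝ) - 1) * ((2:ℝ)⁻¹) ^ M) := hfinal
      _ ≤ (B.card : ℝ) * (((m:ℝ) - 1) * ((2:ℝ)⁻¹) ^ M) := by
          apply mul_le_mul_of_nonneg_right hcardB
          have : (1:ℝ) ≤ (m:ℝ) - 1 := by
            have : (2:ℝ) ≤ (m:ℝ) := by exact_mod_cast hm2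
            linarith
          positivity
      _ ≤ ∑ p ∈ B, (p.length : ℝ) * ((2:ℝ)⁻¹) ^ p.length := hstep
      _ ≤ _ := hsub


end SpecificHeatAux

open SpecificHeatAux in
/-- **Theorem (paper Thm 13(ii)).** For any enumeration `q₁, q₂, …` of
`dom U`, the finite-stage specific heats at temperature `1`,
`C_n(1) = ln 2 · (Y_n/Z_n − (W_n/Z_n)²)`, diverge to infinity. -/
theorem finite_stage_specificHeat_tendsto_atTop (U : Computer)
    (hU : IsOptimal U)
    (q : ℕ → List Bool) (hmem : ∀ n, q n ∈ U.domain)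
    (hinj : Function.Injective q) (hsurj : ∀ p ∈ U.domain, ∃ n, q n = p) :
    Tendsto (fun n : ℕ => Real.log 2 *
      ((∑ i ∈ Finset.range n,
          ((q i).length : ℝ) ^ 2 * (2 : ℝ) ^ (-((q i).length : ℝ))) /
        (∑ i ∈ Finset.range n, (2 : ℝ) ^ (-((q i).length : ℝ))) -
        ((∑ i ∈ Finset.range n,
            ((q i).length : ℝ) * (2 : ℝ) ^ (-((q i).length : ℝ))) /
          (∑ i ∈ Finset.range n, (2 : ℝ) ^ (-((q i).length : ℝ)))) ^ 2))
      atTop atTop := by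
  classical
  have hconv : ∀ L : ℕ, (2:ℝ) ^ (-(L:ℝ)) = ((2:ℝ)⁻¹) ^ L := by
    intro L
    rw [Real.rpow_neg (by norm_num : (0:ℝ) ≤ 2), Real.rpow_natCast, inv_pow]
  simp only [hconv]
  set Zf : ℕ → ℝ := fun n => ∑ i ∈ Finset.range n, ((2:ℝ)⁻¹) ^ (q i).length with hZf
  set Wf : ℕ → ℝ := fun n =>
    ∑ i ∈ Finset.range n, ((q i).length : ℝ) * ((2:ℝ)⁻¹) ^ (q i).length with hWf
  set Yf : ℕ → ℝ := fun n =>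
    ∑ i ∈ Finset.range n, ((q i).length : ℝ) ^ 2 * ((2:ℝ)⁻¹) ^ (q i).length with hYf
  set w₀ : ℝ := ((2:ℝ)⁻¹) ^ (q 0).length with hw₀
  set ℓ₀ : ℝ := ((q 0).length : ℝ) with hℓ₀
  have hw₀pos : 0 < w₀ := by rw [hw₀]; positivity
  -- Z bounds
  have hZle1 : ∀ n, Zf n ≤ 1 := by
    intro n
    have himg : ∑ p ∈ (Finset.range n).image q, ((2:ℝ)⁻¹) ^ p.length = Zf n := by
      rw [Finset.sum_image (fun a _ b _ h => hinj h)]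
    have hpf : PrefixFree (((Finset.range n).image q : Finset (List Bool)) : Set (List Bool)) := by
      apply prefixFree_mono U.prefixFree
      intro p hp
      simp only [Finset.coe_image, Set.mem_image] at hp
      obtain ⟨i, _, rfl⟩ := hp
      exact hmem i
    rw [← himg]
    exact kraft _ hpf
  have hZlow : ∀ n, 1 ≤ n → w₀ ≤ Zf n := by
    intro n hn
    exact Finset.single_le_sum (f := fun i => ((2:ℝ)⁻¹) ^ (q i).length)
      (fun i _ => by positivity) (Finset.mem_range.2 (by omega))
  have hW0 : ∀ n, 0 ≤ Wf n := fun n => Finset.sum_nonneg fun i _ => by positivity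
  have hWmono : Monotone Wf := by
    intro a b hab
    exact Finset.sum_le_sum_of_subset_of_nonneg
      (Finset.range_subset_range.2 hab) (fun i _ _ => by positivity)
  -- W is unbounded
  obtain ⟨ε, hεpos, T, hTdom, hTdisj, hTsum⟩ := exists_level_sets U hU
  have hWunb : ∀ b : ℝ, ∃ n, b ≤ Wf n := by
    intro b
    obtain ⟨K, hK⟩ := exists_nat_ge (b / ε)
    have hbK : b ≤ K * ε := by
      rw [div_le_iff₀ hεpos] at hK
      linarith
    set S : Finset (List Bool) := (Finset.Icc 1 K).biUnion T with hS
    have hsumS : (K:ℝ) * ε ≤ ∑ p ∈ S, (p.length : ℝ) * ((2:ℝ)⁻¹) ^ p.length := by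
      rw [hS, Finset.sum_biUnion]
      · calc (K:ℝ) * ε = ∑ _k ∈ Finset.Icc 1 K, ε := by
              rw [Finset.sum_const, Nat.card_Icc, nsmul_eq_mul]
              norm_num
          _ ≤ _ := Finset.sum_le_sum fun k hk =>
              hTsum k (Finset.mem_Icc.1 hk).1
      · intro j hj k hk hjk
        exact hTdisj j k hjk
    have hSdom : ∀ p ∈ S, p ∈ U.domain := by
      intro p hp
      obtain ⟨k, _, hpk⟩ := Finset.mem_biUnion.1 hp
      exact hTdom k hpk
    have hex : ∀ x : {p // p ∈ S}, ∃ i, q i = x.1 := fun x => hsurj x.1 (hSdom x.1 x.2)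
    choose idx hidx using hex
    set N : ℕ := (S.attach.sup idx) + 1 with hN
    have hsub : S ⊆ (Finset.range N).image q := by
      intro p hp
      refine Finset.mem_image.2 ⟨idx ⟨p, hp⟩, ?_, hidx ⟨p, hp⟩⟩
      refine Finset.mem_range.2 ?_
      have := Finset.le_sup (f := idx) (Finset.mem_attach S ⟨p, hp⟩)
      omega
    refine ⟨N, ?_⟩
    calc b ≤ (K:ℝ) * ε := hbK
      _ ≤ ∑ p ∈ S, (p.length : ℝ) * ((2:ℝ)⁻¹) ^ p.length := hsumS
      _ ≤ ∑ p ∈ (Finset.range N).image q, (p.length : ℝ) * ((2:ℝ)⁻¹) ^ p.length :=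
          Finset.sum_le_sum_of_subset_of_nonneg hsub (fun p _ _ => by positivity)
      _ = Wf N := by rw [Finset.sum_image (fun a _ b _ h => hinj h)]
  have hWtop : Tendsto Wf atTop atTop :=
    tendsto_atTop_atTop_of_monotone hWmono hWunb
  -- lower-bound function
  have hlog2 : 0 < Real.log 2 := Real.log_pos (by norm_num)
  set c : ℝ := Real.log 2 * w₀ with hc
  have hcpos : 0 < c := mul_pos hlog2 hw₀pos
  have hgtop : Tendsto (fun n => c * (Wf n - ℓ₀) ^ 2) atTop atTop := by
    have h1 : Tendsto (fun n => Wf n - ℓ₀) atTop atTop :=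
      tendsto_atTop_add_const_right atTop (-ℓ₀) hWtop
    have h2 : Tendsto (fun n => (Wf n - ℓ₀) ^ 2) atTop atTop :=
      (tendsto_pow_atTop (two_ne_zero)).comp h1
    exact h2.const_mul_atTop hcpos
  apply tendsto_atTop_mono' atTop _ hgtop
  filter_upwards [hWtop.eventually_ge_atTop ℓ₀, eventually_ge_atTop 1] with n hWn hn
  -- pointwise inequality
  have hZpos : 0 < Zf n := lt_of_lt_of_le hw₀pos (hZlow n hn)
  set μ : ℝ := Wf n / Zf n with hμ
  have hμZ : μ * Zf n = Wf n := div_mul_cancel₀ _ hZpos.ne'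
  have hμW : Wf n ≤ μ := by
    rw [hμ, le_div_iff₀ hZpos]
    exact mul_le_of_le_one_right (hW0 n) (hZle1 n)
  have hexp : ∑ i ∈ Finset.range n,
      ((2:ℝ)⁻¹) ^ (q i).length * (((q i).length : ℝ) - μ) ^ 2 = Yf n - μ * Wf n := by
    have hpt : ∀ i ∈ Finset.range n,
        ((2:ℝ)⁻¹) ^ (q i).length * (((q i).length : ℝ) - μ) ^ 2
          = ((q i).length : ℝ) ^ 2 * ((2:ℝ)⁻¹) ^ (q i).length
            - 2 * μ * (((q i).length : ℝ) * ((2:ℝ)⁻¹) ^ (q i).length)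
            + μ ^ 2 * ((2:ℝ)⁻¹) ^ (q i).length := fun i _ => by ring
    rw [Finset.sum_congr rfl hpt, Finset.sum_add_distrib, Finset.sum_sub_distrib,
      ← Finset.mul_sum, ← Finset.mul_sum]
    have : Yf n - 2 * μ * Wf n + μ ^ 2 * Zf n = Yf n - μ * Wf n := by
      linear_combination μ * hμZ
    exact this
  have hnum_nonneg : 0 ≤ Yf n - μ * Wf n := by
    rw [← hexp]
    exact Finset.sum_nonneg fun i _ => by positivity
  have hsingle : w₀ * (ℓ₀ - μ) ^ 2 ≤ Yf n - μ * Wf n := by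
    rw [← hexp]
    exact Finset.single_le_sum
      (f := fun i => ((2:ℝ)⁻¹) ^ (q i).length * (((q i).length : ℝ) - μ) ^ 2)
      (fun i _ => by positivity) (Finset.mem_range.2 (by omega))
  have hdiv : Yf n / Zf n - μ ^ 2 = (Yf n - μ * Wf n) / Zf n := by
    rw [hμ]
    field_simp
  have hkey : w₀ * (ℓ₀ - μ) ^ 2 ≤ Yf n / Zf n - μ ^ 2 := by
    rw [hdiv]
    calc w₀ * (ℓ₀ - μ) ^ 2 ≤ Yf n - μ * Wf n := hsingle
      _ ≤ (Yf n - μ * Wf n) / Zf n := by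
          rw [le_div_iff₀ hZpos]
          exact mul_le_of_le_one_right hnum_nonneg (hZle1 n)
  have hsq : (Wf n - ℓ₀) ^ 2 ≤ (ℓ₀ - μ) ^ 2 := by
    have h1 : 0 ≤ Wf n - ℓ₀ := by linarith
    have h2 : Wf n - ℓ₀ ≤ μ - ℓ₀ := by linarith
    calc (Wf n - ℓ₀) ^ 2 ≤ (μ - ℓ₀) ^ 2 := pow_le_pow_left₀ h1 h2 2
      _ = (ℓ₀ - μ) ^ 2 := by ring
  calc c * (Wf n - ℓ₀) ^ 2 = Real.log 2 * (w₀ * (Wf n - ℓ₀) ^ 2) := by rw [hc]; ring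
    _ ≤ Real.log 2 * (w₀ * (ℓ₀ - μ) ^ 2) := by
        apply mul_le_mul_of_nonneg_left _ hlog2.le
        exact mul_le_mul_of_nonneg_left hsq hw₀pos.le
    _ ≤ Real.log 2 * (Yf n / Zf n - μ ^ 2) :=
        mul_le_mul_of_nonneg_left hkey hlog2.le
    _ = Real.log 2 * (Yf n / Zf n - (Wf n / Zf n) ^ 2) := by rw [hμ]
end
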